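/- arXiv:1609.01074 — 4 statements merged into one kernel-verified Lean document; each statement's English description precedes it below -/
import Mathlib

section
/- Let Ω = (a,b), let u, v ∈ BV(Ω), and let A = {x ∈ Ω : u and v are both continuous at x (in the sense that x is not a jump point of either) and their common continuous values agree, i.e. the left and right limits of the good representatives of u and v at x all coincide}. Then Du(A) = Dv(A), and moreover |Du|(A) = |Dv|(A). -/
open MeasureTheory Set

namespace BVAux

lemma signed_apply (ν : SignedMeasure ℝ) {j : Set ℝ} (hj : MeasurableSet j) :
    ν j = (ν.toJordanDecomposition.posPart j).toReal
        - (ν.toJordanDecomposition.negPart j).toReal := by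
  conv_lhs => rw [← ν.toSignedMeasure_toJordanDecomposition]
  rw [JordanDecomposition.toSignedMeasure, Measure.toSignedMeasure_sub_apply hj]
  rfl

lemma tv_apply (ν : SignedMeasure ℝ) (j : Set ℝ) :
    ν.totalVariation j = ν.toJordanDecomposition.posPart j
      + ν.toJordanDecomposition.negPart j := by
  rw [SignedMeasure.totalVariation, Measure.add_apply]

instance (ν : SignedMeasure ℝ) : IsFiniteMeasure ν.totalVariation := by
  rw [SignedMeasure.totalVariation]; infer_instance

lemma abs_le_tv (ν : SignedMeasure ℝ) {j : Set ℝ} (hj : MeasurableSet j) :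
    |ν j| ≤ (ν.totalVariation j).toReal := by
  rw [signed_apply ν hj, tv_apply,
    ENNReal.toReal_add (measure_ne_top _ _) (measure_ne_top _ _)]
  have h1 : (0:ℝ) ≤ (ν.toJordanDecomposition.posPart j).toReal := ENNReal.toReal_nonneg
  have h2 : (0:ℝ) ≤ (ν.toJordanDecomposition.negPart j).toReal := ENNReal.toReal_nonneg
  rw [abs_sub_le_iff]; constructor <;> linarith

lemma pos_eq_neg_of_zero (ν : SignedMeasure ℝ) {j : Set ℝ} (hj : MeasurableSet j)
    (h : ν j = 0) :
    ν.toJordanDecomposition.posPart j = ν.toJordanDecomposition.negPart j := by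
  have h0 := signed_apply ν hj
  rw [h] at h0
  have h2 : (ν.toJordanDecomposition.posPart j).toReal
      = (ν.toJordanDecomposition.negPart j).toReal := by linarith
  exact (ENNReal.toReal_eq_toReal_iff' (measure_ne_top _ _) (measure_ne_top _ _)).mp h2

lemma sup_zero (ν : SignedMeasure ℝ) (B : ℕ → Set ℝ) (hm : ∀ n, MeasurableSet (B n))
    (hd : Directed (· ⊆ ·) B) (h : ∀ n, ν (B n) = 0) : ν (⋃ n, B n) = 0 := by
  rw [signed_apply ν (MeasurableSet.iUnion hm), hd.measure_iUnion, hd.measure_iUnion,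
    sub_eq_zero]
  congr 1
  exact iSup_congr fun n => (pos_eq_neg_of_zero ν (hm n) (h n))

lemma core (ν : SignedMeasure ℝ) (A : Set ℝ) (hA : MeasurableSet A)
    (hbdd : Bornology.IsBounded A)
    (h1 : ∀ x ∈ A, ν {x} = 0)
    (h2 : ∀ x ∈ A, ∀ y ∈ A, x ≤ y → ν (Ioc x y) = 0) :
    ν A = 0 := by
  classical
  have h3 : ∀ x ∈ A, ∀ y ∈ A, x ≤ y → ν (Ioo x y) = 0 := by
    intro x hx y hy hxy
    rcases eq_or_lt_of_le hxy with rfl | hlt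
    · rw [Set.Ioo_self, ν.empty]
    · have hu : Ioo x y ∪ {y} = Ioc x y := Set.Ioo_union_right hlt
      have hdisj : Disjoint (Ioo x y) {y} := by
        simp [Set.disjoint_singleton_right]
      have h0 := ν.of_union hdisj measurableSet_Ioo (measurableSet_singleton y)
      rw [hu, h2 x hx y hy hxy, h1 y hy] at h0
      linarith
  -- interval between inf and sup of a subset of A is ν-null
  have lem_two : ∀ S : Set ℝ, S ⊆ A → S.Nonempty → ν (Ioo (sInf S) (sSup S)) = 0 := by
    intro S hSA hne
    have hba : BddAbove S := (hbdd.subset hSA).bddAbove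
    have hbb : BddBelow S := (hbdd.subset hSA).bddBelow
    set t := sSup S with htdef
    have hyle : ∀ z ∈ S, z ≤ t := fun z hz => le_csSup hba hz
    have claimR : ∀ x ∈ A, ν (Ioo x t) = 0 := by
      intro x hx
      by_cases ht : t ∈ A
      · rcases le_or_gt x t with h | h
        · exact h3 x hx t ht h
        · rw [Set.Ioo_eq_empty (not_lt.mpr h.le), ν.empty]
      · obtain ⟨y, hy, hyt⟩ := mem_closure_iff_seq_limit.mp (csSup_mem_closure hne hba)
        have hm : ∀ n, MeasurableSet (Ioo x (max x (y n))) := fun _ => measurableSet_Ioo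
        have h0 : ∀ n, ν (Ioo x (max x (y n))) = 0 := by
          intro n
          rcases le_total (y n) x with h | h
          · rw [max_eq_left h, Set.Ioo_self, ν.empty]
          · rw [max_eq_right h]
            exact h3 x hx (y n) (hSA (hy n)) h
        have hdir : Directed (· ⊆ ·) (fun n => Ioo x (max x (y n))) := by
          intro m n
          rcases le_total (max x (y m)) (max x (y n)) with h | h
          · exact ⟨n, Set.Ioo_subset_Ioo_right h, subset_rfl⟩
          · exact ⟨m, subset_rfl, Set.Ioo_subset_Ioo_right h⟩
        have hun : (⋃ n, Ioo x (max x (y n))) = Ioo x t := by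
          apply Set.Subset.antisymm
          · refine Set.iUnion_subset fun n => ?_
            rintro z ⟨hz1, hz2⟩
            refine ⟨hz1, ?_⟩
            rcases max_cases x (y n) with ⟨he, _⟩ | ⟨he, _⟩
            · rw [he] at hz2; exact absurd hz2 (lt_asymm hz1)
            · rw [he] at hz2; exact lt_of_lt_of_le hz2 (hyle (y n) (hy n))
          · intro z hz
            obtain ⟨n, hn⟩ := (hyt.eventually (eventually_gt_nhds hz.2)).exists
            exact Set.mem_iUnion.mpr ⟨n, hz.1, lt_of_lt_of_le hn (le_max_right _ _)⟩
        rw [← hun]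
        exact sup_zero ν _ hm hdir h0
    set s := sInf S with hsdef
    by_cases hs : s ∈ A
    · exact claimR s hs
    · obtain ⟨x, hxS, hxs⟩ := mem_closure_iff_seq_limit.mp (csInf_mem_closure hne hbb)
      have hm : ∀ n, MeasurableSet (Ioo (x n) t) := fun _ => measurableSet_Ioo
      have h0 : ∀ n, ν (Ioo (x n) t) = 0 := fun n => claimR (x n) (hSA (hxS n))
      have hdir : Directed (· ⊆ ·) fun n => Ioo (x n) t := by
        intro m n
        rcases le_total (x m) (x n) with h | h
        · exact ⟨m, subset_rfl, Set.Ioo_subset_Ioo_left h⟩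
        · exact ⟨n, Set.Ioo_subset_Ioo_left h, subset_rfl⟩
      have hun : (⋃ n, Ioo (x n) t) = Ioo s t := by
        apply Set.Subset.antisymm
        · exact Set.iUnion_subset fun n => Set.Ioo_subset_Ioo_left (csInf_le hbb (hxS n))
        · intro z hz
          obtain ⟨n, hn⟩ := (hxs.eventually (eventually_lt_nhds hz.1)).exists
          exact Set.mem_iUnion.mpr ⟨n, hn, hz.2⟩
      rw [← hun]; exact sup_zero ν _ hm hdir h0
  have lem_comp : ∀ I : Set ℝ, MeasurableSet I → I.OrdConnected →
      |ν (A ∩ I)| ≤ (ν.totalVariation (I \ A)).toReal := by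
    intro I hI hIord
    by_cases hne : (A ∩ I).Nonempty
    · set S := A ∩ I with hSdef
      have hSA : S ⊆ A := Set.inter_subset_left
      have hSI : S ⊆ I := Set.inter_subset_right
      have hSmeas : MeasurableSet S := hA.inter hI
      have hba : BddAbove S := (hbdd.subset hSA).bddAbove
      have hbb : BddBelow S := (hbdd.subset hSA).bddBelow
      set s := sInf S with hs
      set t := sSup S with ht
      have hIoo0 : ν (Ioo s t) = 0 := lem_two S hSA hne
      have hIooI : Ioo s t ⊆ I := by
        intro z hz
        obtain ⟨w, hwS, hwz⟩ := exists_lt_of_csInf_lt hne hz.1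
        obtain ⟨w', hw'S, hzw'⟩ := exists_lt_of_lt_csSup hne hz.2
        exact hIord.out (hSI hwS) (hSI hw'S) ⟨hwz.le, hzw'.le⟩
      have hS_Icc : S ⊆ Icc s t := fun z hz => ⟨csInf_le hbb hz, le_csSup hba hz⟩
      have hsingle : ∀ (c : ℝ) (T : Set ℝ), T ⊆ {c} → T ⊆ A → ν T = 0 := by
        intro c T hTc hTA
        rcases Set.subset_singleton_iff_eq.mp hTc with rfl | rfl
        · exact ν.empty
        · exact h1 c (hTA rfl)
      have hbound0 : ν (S \ Ioo s t) = 0 := by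
        have hsub : S \ Ioo s t ⊆ {s, t} := by
          intro z hz
          rcases hS_Icc hz.1 with ⟨h1', h2'⟩
          rcases eq_or_lt_of_le h1' with he | hlt
          · exact Or.inl he.symm
          rcases eq_or_lt_of_le h2' with he | hlt2
          · exact Or.inr he
          exact absurd ⟨hlt, hlt2⟩ hz.2
        have hmz : MeasurableSet (S \ Ioo s t) := hSmeas.diff measurableSet_Ioo
        have hdecomp : S \ Ioo s t
            = ((S \ Ioo s t) ∩ {s}) ∪ ((S \ Ioo s t) \ {s}) :=
          (Set.inter_union_diff _ _).symm
        have hd2 : (S \ Ioo s t) \ {s} ⊆ {t} := by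
          intro z hz
          rcases hsub hz.1 with h | h
          · exact absurd h hz.2
          · exact h
        have hdisj : Disjoint ((S \ Ioo s t) ∩ {s}) ((S \ Ioo s t) \ {s}) :=
          disjoint_sdiff_self_right.mono_left Set.inter_subset_right
        have h0 := ν.of_union hdisj (hmz.inter (measurableSet_singleton s))
          (hmz.diff (measurableSet_singleton s))
        rw [← hdecomp] at h0
        rw [h0, hsingle s _ Set.inter_subset_right (fun z hz => hSA hz.1.1),
          hsingle t _ hd2 (fun z hz => hSA hz.1.1), add_zero]
      have hsplit : ν S = ν (S ∩ Ioo s t) := by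
        have hdec : S = (S ∩ Ioo s t) ∪ (S \ Ioo s t) := (Set.inter_union_diff _ _).symm
        have hdisj : Disjoint (S ∩ Ioo s t) (S \ Ioo s t) :=
          disjoint_sdiff_self_right.mono_left Set.inter_subset_right
        have h0 := ν.of_union hdisj (hSmeas.inter measurableSet_Ioo)
          (hSmeas.diff measurableSet_Ioo)
        rw [← hdec] at h0
        rw [h0, hbound0, add_zero]
      have hsplit2 : ν (S ∩ Ioo s t) = - ν (Ioo s t \ S) := by
        have hu : (S ∩ Ioo s t) ∪ (Ioo s t \ S) = Ioo s t := by
          rw [Set.inter_comm]; exact Set.inter_union_diff _ _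
        have hdisj : Disjoint (S ∩ Ioo s t) (Ioo s t \ S) :=
          disjoint_sdiff_self_right.mono_left Set.inter_subset_left
        have h0 := ν.of_union hdisj (hSmeas.inter measurableSet_Ioo)
          (measurableSet_Ioo.diff hSmeas)
        rw [hu, hIoo0] at h0
        linarith
      have hmono : ν.totalVariation (Ioo s t \ S) ≤ ν.totalVariation (I \ A) := by
        apply measure_mono
        intro z hz
        exact ⟨hIooI hz.1, fun hzA => hz.2 ⟨hzA, hIooI hz.1⟩⟩
      calc |ν (A ∩ I)| = |ν (Ioo s t \ S)| := by
            rw [← hSdef, hsplit, hsplit2, abs_neg]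
        _ ≤ (ν.totalVariation (Ioo s t \ S)).toReal :=
            abs_le_tv ν (measurableSet_Ioo.diff hSmeas)
        _ ≤ (ν.totalVariation (I \ A)).toReal :=
            ENNReal.toReal_mono (measure_ne_top _ _) hmono
    · rw [Set.not_nonempty_iff_eq_empty.mp hne, ν.empty, abs_zero]
      exact ENNReal.toReal_nonneg
  -- main argument
  by_contra hne0
  have hpos : 0 < |ν A| := abs_pos.mpr hne0
  have hfin : ν.totalVariation A ≠ ⊤ := measure_ne_top _ _
  have hlt : ν.totalVariation A < ν.totalVariation A + ENNReal.ofReal |ν A| :=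
    ENNReal.lt_add_right hfin (ENNReal.ofReal_pos.mpr hpos).ne'
  obtain ⟨U, hAU, hUopen, hU⟩ := Set.exists_isOpen_lt_of_lt A _ hlt
  have hdiff : ν.totalVariation (U \ A) < ENNReal.ofReal |ν A| :=
    measure_diff_lt_of_lt_add hA.nullMeasurableSet hAU hfin hU
  set e : ℕ → ℚ := fun n => (Denumerable.eqv ℚ).symm n with he
  set f : ℕ → Set ℝ := fun n =>
    if ((e n : ℚ) : ℝ) ∈ U then connectedComponentIn U ((e n : ℚ) : ℝ) else ∅ with hf
  have hfopen : ∀ n, IsOpen (f n) := by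
    intro n; rw [hf]; dsimp only; split
    · exact hUopen.connectedComponentIn
    · exact isOpen_empty
  have hfsub : ∀ n, f n ⊆ U := by
    intro n; rw [hf]; dsimp only; split
    · exact connectedComponentIn_subset _ _
    · exact Set.empty_subset _
  have hford : ∀ n, (f n).OrdConnected := by
    intro n; rw [hf]; dsimp only; split
    · exact isPreconnected_connectedComponentIn.ordConnected
    · exact Set.ordConnected_empty
  have hfU : (⋃ n, f n) = U := by
    apply Set.Subset.antisymm (Set.iUnion_subset hfsub)
    intro x hx
    have hCopen : IsOpen (connectedComponentIn U x) := hUopen.connectedComponentIn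
    have hCne : (connectedComponentIn U x).Nonempty := ⟨x, mem_connectedComponentIn hx⟩
    obtain ⟨q, hq⟩ := Rat.denseRange_cast.exists_mem_open hCopen hCne
    have hqU : ((q : ℝ)) ∈ U := connectedComponentIn_subset _ _ hq
    refine Set.mem_iUnion.mpr ⟨(Denumerable.eqv ℚ) q, ?_⟩
    rw [hf]; dsimp only
    have heq : e ((Denumerable.eqv ℚ) q) = q := by simp [he]
    rw [heq, if_pos hqU, ← connectedComponentIn_eq hq]
    exact mem_connectedComponentIn hx
  have hkey : ∀ m n, f m = f n ∨ Disjoint (f m) (f n) := by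
    intro m n
    by_cases hd : Disjoint (f m) (f n)
    · exact Or.inr hd
    · left
      obtain ⟨z, hzm, hzn⟩ := Set.not_disjoint_iff.mp hd
      rw [hf] at hzm hzn ⊢
      dsimp only at hzm hzn ⊢
      by_cases h1' : ((e m : ℚ) : ℝ) ∈ U
      swap
      · rw [if_neg h1'] at hzm; exact absurd hzm (Set.notMem_empty z)
      by_cases h2' : ((e n : ℚ) : ℝ) ∈ U
      swap
      · rw [if_neg h2'] at hzn; exact absurd hzn (Set.notMem_empty z)
      rw [if_pos h1'] at hzm ⊢
      rw [if_pos h2'] at hzn ⊢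
      rw [connectedComponentIn_eq hzm, connectedComponentIn_eq hzn]
  set D := disjointed f with hD
  have hDcases : ∀ n, D n = ∅ ∨ D n = f n := by
    intro n
    by_cases hmt : ∃ m, m < n ∧ ¬ Disjoint (f m) (f n)
    · left
      obtain ⟨m, hmn, hnd⟩ := hmt
      have hfe : f m = f n := (hkey m n).resolve_right hnd
      have hsub : D n ⊆ f n \ f m := by
        rw [hD, disjointed_eq_inter_compl]
        intro z hz
        exact ⟨hz.1, Set.mem_iInter₂.mp hz.2 m hmn⟩
      rw [hfe, Set.diff_self] at hsub
      exact Set.subset_empty_iff.mp hsub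
    · right
      push_neg at hmt
      rw [hD, disjointed_eq_inter_compl]
      apply Set.Subset.antisymm Set.inter_subset_left
      intro z hz
      exact ⟨hz, Set.mem_iInter₂.mpr fun m hm => Set.disjoint_right.mp (hmt m hm) hz⟩
  have hDmeas : ∀ n, MeasurableSet (D n) := by
    intro n
    rcases hDcases n with h | h <;> rw [h]
    · exact MeasurableSet.empty
    · exact (hfopen n).measurableSet
  have hDord : ∀ n, (D n).OrdConnected := by
    intro n
    rcases hDcases n with h | h <;> rw [h]
    · exact Set.ordConnected_empty
    · exact hford n
  have hDdisj : Pairwise (Function.onFun Disjoint D) := disjoint_disjointed f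
  have hDU : (⋃ n, D n) = U := by rw [hD, iUnion_disjointed, hfU]
  have hADm : ∀ n, MeasurableSet (A ∩ D n) := fun n => hA.inter (hDmeas n)
  have hADd : Pairwise (Function.onFun Disjoint fun n => A ∩ D n) := fun m n hmn =>
    ((hDdisj hmn).inf_left' A).inf_right' A
  have hAeq : (⋃ n, A ∩ D n) = A := by
    rw [← Set.inter_iUnion, hDU, Set.inter_eq_self_of_subset_left hAU]
  have hHas : HasSum (fun n => ν (A ∩ D n)) (ν A) := by
    have h0 := ν.m_iUnion hADm hADd
    rwa [hAeq] at h0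
  have hdU : (⋃ n, D n \ A) = U \ A := by rw [← Set.iUnion_diff, hDU]
  have hsum2 : (∑' n, ν.totalVariation (D n \ A)) = ν.totalVariation (U \ A) := by
    rw [← hdU]
    exact (measure_iUnion (hDdisj.mono fun i j h => h.mono Set.diff_subset Set.diff_subset)
      (fun n => (hDmeas n).diff hA)).symm
  have hgsummable : Summable (fun n => (ν.totalVariation (D n \ A)).toReal) := by
    apply ENNReal.summable_toReal
    rw [hsum2]; exact measure_ne_top _ _
  have hbound : ∀ n, |ν (A ∩ D n)| ≤ (ν.totalVariation (D n \ A)).toReal := fun n =>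
    lem_comp (D n) (hDmeas n) (hDord n)
  have habs_sum : Summable fun n => |ν (A ∩ D n)| :=
    Summable.of_nonneg_of_le (fun _ => abs_nonneg _) hbound hgsummable
  have h1' : |ν A| ≤ ∑' n, |ν (A ∩ D n)| := by
    have h0 := norm_tsum_le_tsum_norm (f := fun n => ν (A ∩ D n))
      (by simpa [Real.norm_eq_abs] using habs_sum)
    simpa [Real.norm_eq_abs, hHas.tsum_eq] using h0
  have h2' : (∑' n, |ν (A ∩ D n)|) ≤ ∑' n, (ν.totalVariation (D n \ A)).toReal :=
    Summable.tsum_le_tsum hbound habs_sum hgsummable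
  have h3' : (∑' n, (ν.totalVariation (D n \ A)).toReal)
      = (ν.totalVariation (U \ A)).toReal := by
    rw [← ENNReal.tsum_toReal_eq (fun n => measure_ne_top _ _), hsum2]
  have h4' : (ν.totalVariation (U \ A)).toReal < |ν A| := by
    have h0 := (ENNReal.toReal_lt_toReal (measure_ne_top _ _) ENNReal.ofReal_ne_top).mpr hdiff
    rwa [ENNReal.toReal_ofReal (abs_nonneg _)] at h0
  linarith

lemma ofReal_le_tv (t : SignedMeasure ℝ) {B : Set ℝ} (hB : MeasurableSet B) :
    ENNReal.ofReal (t B) ≤ t.totalVariation B := by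
  rw [tv_apply]
  have h0 := signed_apply t hB
  have h1 : t B ≤ (t.toJordanDecomposition.posPart B).toReal := by
    have := ENNReal.toReal_nonneg (a := t.toJordanDecomposition.negPart B)
    linarith
  calc ENNReal.ofReal (t B)
      ≤ ENNReal.ofReal ((t.toJordanDecomposition.posPart B).toReal) :=
        ENNReal.ofReal_le_ofReal h1
    _ = t.toJordanDecomposition.posPart B := ENNReal.ofReal_toReal (measure_ne_top _ _)
    _ ≤ _ := self_le_add_right _ _

lemma ofReal_neg_le_tv (t : SignedMeasure ℝ) {B : Set ℝ} (hB : MeasurableSet B) :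
    ENNReal.ofReal (-(t B)) ≤ t.totalVariation B := by
  rw [tv_apply]
  have h0 := signed_apply t hB
  have h1 : -(t B) ≤ (t.toJordanDecomposition.negPart B).toReal := by
    have := ENNReal.toReal_nonneg (a := t.toJordanDecomposition.posPart B)
    linarith
  calc ENNReal.ofReal (-(t B))
      ≤ ENNReal.ofReal ((t.toJordanDecomposition.negPart B).toReal) :=
        ENNReal.ofReal_le_ofReal h1
    _ = t.toJordanDecomposition.negPart B := ENNReal.ofReal_toReal (measure_ne_top _ _)
    _ ≤ _ := self_le_add_left _ _

lemma tv_le (s t : SignedMeasure ℝ) (A : Set ℝ) (hA : MeasurableSet A)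
    (h : ∀ E : Set ℝ, MeasurableSet E → E ⊆ A → s E = t E) :
    s.totalVariation A ≤ t.totalVariation A := by
  obtain ⟨i, hi₁, hi₂, hi₃, hpos, hneg⟩ := s.toJordanDecomposition_spec
  have hps : 0 ≤ s (i ∩ A) := s.nonneg_of_zero_le_restrict
    (s.zero_le_restrict_subset hi₁ Set.inter_subset_left hi₂)
  have hns : s (iᶜ ∩ A) ≤ 0 := s.nonpos_of_restrict_le_zero
    (s.restrict_le_zero_subset hi₁.compl Set.inter_subset_left hi₃)
  have hAi : s.totalVariation A
      = ENNReal.ofReal (s (i ∩ A)) + ENNReal.ofReal (-(s (iᶜ ∩ A))) := by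
    rw [tv_apply, hpos, hneg, SignedMeasure.toMeasureOfZeroLE_apply _ hi₂ hi₁ hA,
      SignedMeasure.toMeasureOfLEZero_apply _ hi₃ hi₁.compl hA]
    rw [ENNReal.ofReal_eq_coe_nnreal hps, ENNReal.ofReal_eq_coe_nnreal (by linarith)]
  rw [hAi, h _ (hi₁.inter hA) Set.inter_subset_right,
    h _ (hi₁.compl.inter hA) Set.inter_subset_right]
  calc ENNReal.ofReal (t (i ∩ A)) + ENNReal.ofReal (-(t (iᶜ ∩ A)))
      ≤ t.totalVariation (i ∩ A) + t.totalVariation (iᶜ ∩ A) :=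
        add_le_add (ofReal_le_tv t (hi₁.inter hA)) (ofReal_neg_le_tv t (hi₁.compl.inter hA))
    _ = t.totalVariation A := by
        rw [Set.inter_comm i A, Set.inter_comm iᶜ A, ← Set.diff_eq]
        exact measure_inter_add_diff A hi₁

lemma meas_cdf_Ioo (s : SignedMeasure ℝ) (a : ℝ) :
    Measurable fun x => s (Set.Ioo a x) := by
  have h0 : (fun x => s (Set.Ioo a x)) = fun x =>
      (s.toJordanDecomposition.posPart (Set.Ioo a x)).toReal
      - (s.toJordanDecomposition.negPart (Set.Ioo a x)).toReal :=
    funext fun x => signed_apply s measurableSet_Ioo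
  rw [h0]
  apply Measurable.sub <;>
  · apply Monotone.measurable
    intro x y hxy
    exact ENNReal.toReal_mono (measure_ne_top _ _)
      (measure_mono (Set.Ioo_subset_Ioo_right hxy))

lemma meas_cdf_Ioc (s : SignedMeasure ℝ) (a : ℝ) :
    Measurable fun x => s (Set.Ioc a x) := by
  have h0 : (fun x => s (Set.Ioc a x)) = fun x =>
      (s.toJordanDecomposition.posPart (Set.Ioc a x)).toReal
      - (s.toJordanDecomposition.negPart (Set.Ioc a x)).toReal :=
    funext fun x => signed_apply s measurableSet_Ioc
  rw [h0]
  apply Measurable.sub <;>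
  · apply Monotone.measurable
    intro x y hxy
    exact ENNReal.toReal_mono (measure_ne_top _ _)
      (measure_mono (Set.Ioc_subset_Ioc_right hxy))

end BVAux

open BVAux

/-- A one-dimensional BV function on `(a,b)` represented by a constant `c` together with its
derivative, a finite signed Radon measure `μ`. -/
structure BVRep where
  c : ℝ
  μ : MeasureTheory.SignedMeasure ℝ

/-- The left limit `u^l(x) = c + Du((a,x))` of the good representatives. -/
noncomputable def BVRep.leftLim (a : ℝ) (p : BVRep) (x : ℝ) : ℝ :=
  p.c + p.μ (Set.Ioo a x)

/-- The right limit `u^r(x) = c + Du((a,x])` of the good representatives. -/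
noncomputable def BVRep.rightLim (a : ℝ) (p : BVRep) (x : ℝ) : ℝ :=
  p.c + p.μ (Set.Ioc a x)

/-- for `u, v ∈ BV((a,b))` and
`A = {x ∈ (a,b) : u^l(x) = u^r(x) = v^l(x) = v^r(x)}` (the set of common continuity points
where the values agree), one has `Du(A) = Dv(A)` and `|Du|(A) = |Dv|(A)`. -/
theorem derivative_measures_agree_on_common_continuity_points
    (a b : ℝ) (hab : a < b) (p q : BVRep) :
    p.μ {x ∈ Set.Ioo a b |
        BVRep.leftLim a p x = BVRep.rightLim a p x ∧
        BVRep.leftLim a q x = BVRep.rightLim a q x ∧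
        BVRep.leftLim a p x = BVRep.leftLim a q x} =
      q.μ {x ∈ Set.Ioo a b |
        BVRep.leftLim a p x = BVRep.rightLim a p x ∧
        BVRep.leftLim a q x = BVRep.rightLim a q x ∧
        BVRep.leftLim a p x = BVRep.leftLim a q x} ∧
    p.μ.totalVariation {x ∈ Set.Ioo a b |
        BVRep.leftLim a p x = BVRep.rightLim a p x ∧
        BVRep.leftLim a q x = BVRep.rightLim a q x ∧
        BVRep.leftLim a p x = BVRep.leftLim a q x} =
      q.μ.totalVariation {x ∈ Set.Ioo a b |
        BVRep.leftLim a p x = BVRep.rightLim a p x ∧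
        BVRep.leftLim a q x = BVRep.rightLim a q x ∧
        BVRep.leftLim a p x = BVRep.leftLim a q x} := by
  classical
  set A := {x ∈ Set.Ioo a b |
        BVRep.leftLim a p x = BVRep.rightLim a p x ∧
        BVRep.leftLim a q x = BVRep.rightLim a q x ∧
        BVRep.leftLim a p x = BVRep.leftLim a q x} with hAdef
  have hlp : Measurable (BVRep.leftLim a p) := by
    unfold BVRep.leftLim
    exact measurable_const.add (meas_cdf_Ioo p.μ a)
  have hlq : Measurable (BVRep.leftLim a q) := by
    unfold BVRep.leftLim
    exact measurable_const.add (meas_cdf_Ioo q.μ a)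
  have hrp : Measurable (BVRep.rightLim a p) := by
    unfold BVRep.rightLim
    exact measurable_const.add (meas_cdf_Ioc p.μ a)
  have hrq : Measurable (BVRep.rightLim a q) := by
    unfold BVRep.rightLim
    exact measurable_const.add (meas_cdf_Ioc q.μ a)
  have hA : MeasurableSet A := by
    have hrepr : A = Set.Ioo a b ∩ ({x | BVRep.leftLim a p x = BVRep.rightLim a p x}
        ∩ ({x | BVRep.leftLim a q x = BVRep.rightLim a q x}
        ∩ {x | BVRep.leftLim a p x = BVRep.leftLim a q x})) := by
      ext x
      constructor
      · rintro ⟨h0, hh1, hh2, hh3⟩; exact ⟨h0, hh1, hh2, hh3⟩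
      · rintro ⟨h0, hh1, hh2, hh3⟩; exact ⟨h0, hh1, hh2, hh3⟩
    rw [hrepr]
    exact measurableSet_Ioo.inter ((measurableSet_eq_fun hlp hrp).inter
      ((measurableSet_eq_fun hlq hrq).inter (measurableSet_eq_fun hlp hlq)))
  have hAsub : A ⊆ Set.Ioo a b := fun x hx => hx.1
  have hbdd : Bornology.IsBounded A :=
    (Bornology.IsBounded.subset (Metric.isBounded_Ioo a b) hAsub)
  set ν : SignedMeasure ℝ := p.μ - q.μ with hν
  -- singletons
  have hp0 : ∀ x ∈ A, p.μ {x} = 0 := by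
    intro x hx
    have heq : p.c + p.μ (Set.Ioo a x) = p.c + p.μ (Set.Ioc a x) := hx.2.1
    have hu := p.μ.of_union
      (show Disjoint (Set.Ioo a x) {x} by simp [Set.disjoint_singleton_right])
      measurableSet_Ioo (measurableSet_singleton x)
    rw [Set.Ioo_union_right hx.1.1] at hu
    linarith
  have hq0 : ∀ x ∈ A, q.μ {x} = 0 := by
    intro x hx
    have heq : q.c + q.μ (Set.Ioo a x) = q.c + q.μ (Set.Ioc a x) := hx.2.2.1
    have hu := q.μ.of_union
      (show Disjoint (Set.Ioo a x) {x} by simp [Set.disjoint_singleton_right])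
      measurableSet_Ioo (measurableSet_singleton x)
    rw [Set.Ioo_union_right hx.1.1] at hu
    linarith
  have h1 : ∀ x ∈ A, ν {x} = 0 := by
    intro x hx
    rw [hν, VectorMeasure.sub_apply, hp0 x hx, hq0 x hx, sub_zero]
  have hIocax : ∀ x ∈ A, ν (Set.Ioc a x) = q.c - p.c := by
    intro x hx
    have h₁ : p.c + p.μ (Set.Ioo a x) = p.c + p.μ (Set.Ioc a x) := hx.2.1
    have h₂ : q.c + q.μ (Set.Ioo a x) = q.c + q.μ (Set.Ioc a x) := hx.2.2.1
    have h₃ : p.c + p.μ (Set.Ioo a x) = q.c + q.μ (Set.Ioo a x) := hx.2.2.2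
    rw [hν, VectorMeasure.sub_apply]
    linarith
  have h2 : ∀ x ∈ A, ∀ y ∈ A, x ≤ y → ν (Set.Ioc x y) = 0 := by
    intro x hx y hy hxy
    have hu := ν.of_union (Set.Ioc_disjoint_Ioc_of_le (a := a) (b := x) (c := x) (d := y) le_rfl)
      measurableSet_Ioc measurableSet_Ioc
    rw [Set.Ioc_union_Ioc_eq_Ioc hx.1.1.le hxy] at hu
    have e1 := hIocax x hx
    have e2 := hIocax y hy
    linarith
  have hEzero : ∀ E : Set ℝ, MeasurableSet E → E ⊆ A → ν E = 0 := by
    intro E hE hEA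
    exact core ν E hE (hbdd.subset hEA) (fun x hx => h1 x (hEA hx))
      (fun x hx y hy hxy => h2 x (hEA hx) y (hEA hy) hxy)
  have hpq : ∀ E : Set ℝ, MeasurableSet E → E ⊆ A → p.μ E = q.μ E := by
    intro E hE hEA
    have h0 := hEzero E hE hEA
    rw [hν, VectorMeasure.sub_apply] at h0
    linarith
  exact ⟨hpq A hA subset_rfl,
    le_antisymm (tv_le p.μ q.μ A hA hpq)
      (tv_le q.μ p.μ A hA fun E hE hEA => (hpq E hE hEA).symm)⟩
end

section
/- Let x ∈ ℝ, ε > 0, and let v : (x−ε, x+ε) → ℝ be Lipschitz continuous and α : (x−ε, x+ε) → ℝ be differentiable at x, with v(t) ≥ −α(t) for all t and v(x) = −α(x). Suppose there exist real numbers m < M such that v′(t) ≤ m for almost every t ∈ (x, x+ε) and v′(t) ≥ M for almost every t ∈ (x−ε, x). Then a contradiction follows; i.e., no such pair (v, α) exists. -/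
open MeasureTheory Set Filter Topology

private lemma lip_ftc {g : ℝ → ℝ} {K : NNReal} (hg : LipschitzWith K g) (a b : ℝ) :
    ∫ t in a..b, deriv g t = g b - g a := by
  have cont : Continuous g := hg.continuous
  have gint : ∀ c d : ℝ, IntervalIntegrable g volume c d := fun c d =>
    cont.intervalIntegrable c d
  set h : ℕ → ℝ := fun n => 1 / (n + 1) with hh
  have hpos : ∀ n, 0 < h n := fun n => by positivity
  have htend : Tendsto h atTop (𝓝 0) := tendsto_one_div_add_atTop_nhds_zero_nat
  set F : ℕ → ℝ → ℝ := fun n t => (g (t + h n) - g t) / h n with hF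
  have hseq : ∀ t : ℝ, Tendsto (fun n => t + h n) atTop (𝓝[≠] t) := by
    intro t
    rw [tendsto_nhdsWithin_iff]
    constructor
    · simpa using tendsto_const_nhds.add htend
    · exact Eventually.of_forall fun n => by
        simp [Set.mem_compl_iff, (hpos n).ne']
  have hptwise : ∀ᵐ t ∂(volume : Measure ℝ),
      Tendsto (fun n => F n t) atTop (𝓝 (deriv g t)) := by
    filter_upwards [hg.ae_differentiableAt] with t ht
    have hd := ht.hasDerivAt
    rw [hasDerivAt_iff_tendsto_slope] at hd
    have h2 := hd.comp (hseq t)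
    have heq : (fun n => slope g t (t + h n)) = fun n => F n t := by
      funext n
      simp [slope_def_field, hF]
    rwa [Function.comp_def, heq] at h2
  have hFbound : ∀ n t, |F n t| ≤ (K : ℝ) := by
    intro n t
    have hd := hg.dist_le_mul (t + h n) t
    simp only [Real.dist_eq, add_sub_cancel_left] at hd
    rw [hF, abs_div, abs_of_pos (hpos n), div_le_iff₀ (hpos n)]
    simpa [abs_of_pos (hpos n)] using hd
  set Φ : ℝ → ℝ := fun u => ∫ t in a..u, g t with hΦ
  have hderivΦ : ∀ c : ℝ, HasDerivAt Φ (g c) c := fun c =>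
    intervalIntegral.integral_hasDerivAt_right (gint a c)
      (cont.stronglyMeasurable.stronglyMeasurableAtFilter) cont.continuousAt
  have hslope : ∀ c : ℝ, Tendsto (fun n => (Φ (c + h n) - Φ c) / h n) atTop (𝓝 (g c)) := by
    intro c
    have hd := hderivΦ c
    rw [hasDerivAt_iff_tendsto_slope] at hd
    have h2 := hd.comp (hseq c)
    have heq : (fun n => slope Φ c (c + h n)) =
        fun n => (Φ (c + h n) - Φ c) / h n := by
      funext n; simp [slope_def_field]
    rwa [Function.comp_def, heq] at h2
  have hintF : ∀ n, ∫ t in a..b, F n t =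
      (Φ (b + h n) - Φ b) / h n - (Φ (a + h n) - Φ a) / h n := by
    intro n
    have h1 : ∫ t in a..b, (g (t + h n) - g t)
        = (∫ t in a + h n..b + h n, g t) - ∫ t in a..b, g t := by
      rw [intervalIntegral.integral_sub (by
        exact (cont.comp (continuous_id.add continuous_const)).intervalIntegrable a b)
        (gint a b)]
      rw [intervalIntegral.integral_comp_add_right]
    have h2 : (∫ t in a + h n..b + h n, g t)
        = Φ (b + h n) - Φ (a + h n) := by
      rw [hΦ]
      rw [← intervalIntegral.integral_interval_sub_left (gint a (b + h n)) (gint a (a + h n))]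
    have h3 : (∫ t in a..b, g t) = Φ b - Φ a := by
      simp [hΦ, intervalIntegral.integral_same]
    calc ∫ t in a..b, F n t = (∫ t in a..b, (g (t + h n) - g t)) / h n := by
          rw [hF]; exact intervalIntegral.integral_div _ _
      _ = ((Φ (b + h n) - Φ (a + h n)) - (Φ b - Φ a)) / h n := by rw [h1, h2, h3]
      _ = (Φ (b + h n) - Φ b) / h n - (Φ (a + h n) - Φ a) / h n := by ring
  have hlim1 : Tendsto (fun n => ∫ t in a..b, F n t) atTop (𝓝 (g b - g a)) := by
    have h2 := (hslope b).sub (hslope a)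
    simpa only [← hintF] using h2
  have hmeasF : ∀ n, AEStronglyMeasurable (F n) (volume.restrict (Set.uIoc a b)) := fun n =>
    (((cont.comp (continuous_id.add continuous_const)).sub cont).div_const
      (h n)).aestronglyMeasurable.restrict
  have hlim2 : Tendsto (fun n => ∫ t in a..b, F n t) atTop (𝓝 (∫ t in a..b, deriv g t)) := by
    apply intervalIntegral.tendsto_integral_filter_of_dominated_convergence
      (fun _ => (K : ℝ)) (Eventually.of_forall hmeasF)
      (Eventually.of_forall fun n => Eventually.of_forall fun t _ => by
        simpa [Real.norm_eq_abs] using hFbound n t)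
      intervalIntegrable_const
    filter_upwards [hptwise] with t ht _ using ht
  exact tendsto_nhds_unique hlim2 hlim1

/-- let `v` be Lipschitz on `(x-ε, x+ε)` and `α` differentiable at `x`, with
`v ≥ -α` on the interval and `v(x) = -α(x)`. If there are `m < M` with `v' ≤ m` a.e. on
`(x, x+ε)` and `v' ≥ M` a.e. on `(x-ε, x)`, then a contradiction follows. -/
theorem no_jump_where_weight_differentiable
    (x ε m M : ℝ) (hε : 0 < ε) (hmM : m < M)
    (v α : ℝ → ℝ) (K : NNReal)
    (hv : LipschitzOnWith K v (Set.Ioo (x - ε) (x + ε)))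
    (hα : DifferentiableAt ℝ α x)
    (hge : ∀ t ∈ Set.Ioo (x - ε) (x + ε), -α t ≤ v t)
    (hvx : v x = -α x)
    (hright : ∀ᵐ t ∂MeasureTheory.volume,
      t ∈ Set.Ioo x (x + ε) → DifferentiableAt ℝ v t → deriv v t ≤ m)
    (hleft : ∀ᵐ t ∂MeasureTheory.volume,
      t ∈ Set.Ioo (x - ε) x → DifferentiableAt ℝ v t → M ≤ deriv v t) :
    False := by
  obtain ⟨g, hgK, hgeq⟩ := hv.extend_real
  have hxmem : x ∈ Set.Ioo (x - ε) (x + ε) := ⟨by linarith, by linarith⟩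
  have hnhds : ∀ t ∈ Set.Ioo (x - ε) (x + ε), v =ᶠ[𝓝 t] g := fun t ht =>
    Filter.eventuallyEq_of_mem (isOpen_Ioo.mem_nhds ht) fun s hs => hgeq hs
  have hbound' : ∀ t : ℝ, |deriv g t| ≤ (K : ℝ) := fun t => by
    simpa [Real.norm_eq_abs] using norm_deriv_le_of_lipschitz (𝕜 := ℝ) hgK
  have hKint : ∀ c d : ℝ, IntervalIntegrable (deriv g) volume c d := by
    intro c d
    rw [intervalIntegrable_iff]
    refine Integrable.mono' (g := fun _ => (K : ℝ)) ?_
      (measurable_deriv g).aestronglyMeasurable.restrict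
      (Eventually.of_forall fun t => by simpa [Real.norm_eq_abs] using hbound' t)
    refine (integrableOn_const_iff).mpr (Or.inr ?_)
    rw [Set.uIoc]
    exact measure_Ioc_lt_top
  have hright_g : ∀ᵐ t ∂(volume : Measure ℝ), t ∈ Set.Ioo x (x + ε) → deriv g t ≤ m := by
    filter_upwards [hright, hgK.ae_differentiableAt] with t h1 h2 ht
    have htI : t ∈ Set.Ioo (x - ε) (x + ε) := ⟨by linarith [ht.1], ht.2⟩
    have heq := hnhds t htI
    have hvd : DifferentiableAt ℝ v t := h2.congr_of_eventuallyEq heq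
    rw [← heq.deriv_eq]
    exact h1 ht hvd
  have hleft_g : ∀ᵐ t ∂(volume : Measure ℝ), t ∈ Set.Ioo (x - ε) x → M ≤ deriv g t := by
    filter_upwards [hleft, hgK.ae_differentiableAt] with t h1 h2 ht
    have htI : t ∈ Set.Ioo (x - ε) (x + ε) := ⟨ht.1, by linarith [ht.2]⟩
    have heq := hnhds t htI
    have hvd : DifferentiableAt ℝ v t := h2.congr_of_eventuallyEq heq
    rw [← heq.deriv_eq]
    exact h1 ht hvd
  -- Key estimate on the right: for t ∈ (x, x+ε), v t - v x ≤ m (t - x)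
  have hRight : ∀ t ∈ Set.Ioo x (x + ε), v t - v x ≤ m * (t - x) := by
    intro t ht
    have htI : t ∈ Set.Ioo (x - ε) (x + ε) := ⟨by linarith [ht.1], ht.2⟩
    have hxt : x ≤ t := ht.1.le
    have hmono : (∫ s in x..t, deriv g s) ≤ ∫ s in x..t, m := by
      apply intervalIntegral.integral_mono_ae_restrict hxt (hKint x t)
        intervalIntegrable_const
      have hnex : ∀ᵐ s ∂(volume : Measure ℝ), s ≠ x := by
        simpa using measure_eq_zero_iff_ae_notMem.mp (measure_singleton x)
      have hnet : ∀ᵐ s ∂(volume : Measure ℝ), s ≠ t := by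
        simpa using measure_eq_zero_iff_ae_notMem.mp (measure_singleton t)
      filter_upwards [ae_restrict_mem measurableSet_Icc, ae_restrict_of_ae hnex,
        ae_restrict_of_ae hnet, ae_restrict_of_ae hright_g] with s hs h1 h2 hb
      exact hb ⟨lt_of_le_of_ne hs.1 (Ne.symm h1),
        lt_of_le_of_lt (le_of_lt (lt_of_le_of_ne hs.2 h2)) ht.2⟩
    have hftc := lip_ftc hgK x t
    have hconst : (∫ s in x..t, (m : ℝ)) = m * (t - x) := by
      simp [mul_comm]
    have hgt : g t - g x ≤ m * (t - x) := by
      rw [← hftc, ← hconst]; exact hmono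
    rwa [← hgeq htI, ← hgeq hxmem] at hgt
  -- Key estimate on the left: for t ∈ (x-ε, x), M * (x - t) ≤ v x - v t
  have hLeft : ∀ t ∈ Set.Ioo (x - ε) x, M * (x - t) ≤ v x - v t := by
    intro t ht
    have htI : t ∈ Set.Ioo (x - ε) (x + ε) := ⟨ht.1, by linarith [ht.2]⟩
    have htx : t ≤ x := ht.2.le
    have hmono : (∫ s in t..x, (M : ℝ)) ≤ ∫ s in t..x, deriv g s := by
      apply intervalIntegral.integral_mono_ae_restrict htx intervalIntegrable_const
        (hKint t x)
      have hnex : ∀ᵐ s ∂(volume : Measure ℝ), s ≠ x := by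
        simpa using measure_eq_zero_iff_ae_notMem.mp (measure_singleton x)
      have hnet : ∀ᵐ s ∂(volume : Measure ℝ), s ≠ t := by
        simpa using measure_eq_zero_iff_ae_notMem.mp (measure_singleton t)
      filter_upwards [ae_restrict_mem measurableSet_Icc, ae_restrict_of_ae hnex,
        ae_restrict_of_ae hnet, ae_restrict_of_ae hleft_g] with s hs h1 h2 hb
      exact hb ⟨lt_of_lt_of_le ht.1 hs.1, lt_of_le_of_ne hs.2 h1⟩
    have hftc := lip_ftc hgK t x
    have hconst : (∫ s in t..x, (M : ℝ)) = M * (x - t) := by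
      simp [mul_comm]
    have hgt : M * (x - t) ≤ g x - g t := by
      rw [← hftc, ← hconst] at *; exact hmono
    rwa [← hgeq htI, ← hgeq hxmem] at hgt
  -- Translate to slope bounds for α
  have hd := hα.hasDerivAt
  rw [hasDerivAt_iff_tendsto_slope] at hd
  have hR : -m ≤ deriv α x := by
    have hdr : Tendsto (slope α x) (𝓝[>] x) (𝓝 (deriv α x)) :=
      hd.mono_left (nhdsWithin_mono _ fun s hs => ne_of_gt hs)
    refine ge_of_tendsto hdr ?_
    filter_upwards [Ioo_mem_nhdsGT (by linarith : x < x + ε)] with t ht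
    have htI : t ∈ Set.Ioo (x - ε) (x + ε) := ⟨by linarith [ht.1], ht.2⟩
    have h1 : -α t ≤ v t := hge t htI
    have h2 : v t - v x ≤ m * (t - x) := hRight t ht
    have h3 : -m * (t - x) ≤ α t - α x := by
      rw [hvx] at h2; linarith
    rw [slope_def_field]
    rw [le_div_iff₀ (by linarith [ht.1] : (0:ℝ) < t - x)]
    linarith
  have hL : deriv α x ≤ -M := by
    have hdl : Tendsto (slope α x) (𝓝[<] x) (𝓝 (deriv α x)) :=
      hd.mono_left (nhdsWithin_mono _ fun s hs => ne_of_lt hs)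
    refine le_of_tendsto hdl ?_
    filter_upwards [Ioo_mem_nhdsLT (by linarith : x - ε < x)] with t ht
    have htI : t ∈ Set.Ioo (x - ε) (x + ε) := ⟨ht.1, by linarith [ht.2]⟩
    have h1 : -α t ≤ v t := hge t htI
    have h2 : M * (x - t) ≤ v x - v t := hLeft t ⟨ht.1, ht.2⟩
    rw [hvx] at h2
    rw [slope_def_field, div_le_iff_of_neg (by linarith [ht.2] : t - x < 0)]
    linarith
  linarith
end

section
/- Let Ω = (a,b), f ∈ L²(Ω), u ∈ BV(Ω), and α ∈ C(closure(Ω)) with α > 0 on all of closure(Ω). Define the energy E(u) = (1/2)∫_Ω (f−u)² dx + ∫_Ω α d|Du|. Let ũ be any representative of u, let S = esssup f and s = essinf f (assumed finite), and set u* (x) = max(min(S, ũ(x)), s), the truncation of ũ to [s, S]. Then u* ∈ BV(Ω) and E(u*) ≤ E(u). Consequently the minimizer u of E satisfies essinf f ≤ u ≤ esssup f almost everywhere. -/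
open MeasureTheory Set

/-- The good representative of a 1D BV function `x ↦ c + Du((a,x))`. -/
noncomputable def BVRep.fn (a : ℝ) (p : BVRep) : ℝ → ℝ :=
  fun x => p.c + p.μ (Set.Ioo a x)

/-- The energy `E(u) = (1/2)∫_Ω (f - u)² dx + ∫_Ω α d|Du|`. -/
noncomputable def wEnergy (a b : ℝ) (f α : ℝ → ℝ) (p : BVRep) : ℝ :=
  (1/2) * (∫ x in Set.Ioo a b, (f x - BVRep.fn a p x)^2) +
    ∫ x in Set.Ioo a b, α x ∂p.μ.totalVariation


open Filter Topology Function
open scoped NNReal ENNReal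

section AuxLemmas

section helpers

lemma trunc_lipschitz (S s u v : ℝ) :
    |max (min S u) s - max (min S v) s| ≤ |u - v| := by
  have h1 : |min S u - min S v| ≤ |u - v| := by
    have := abs_min_sub_min_le_max S u S v
    simpa using this
  calc |max (min S u) s - max (min S v) s| ≤ |min S u - min S v| :=
        abs_max_sub_max_le_abs _ _ _
    _ ≤ |u - v| := h1

lemma trunc_sq_le {S s t : ℝ} (hsS : s ≤ S) (h1 : s ≤ t) (h2 : t ≤ S) (u : ℝ) :
    (t - max (min S u) s)^2 ≤ (t - u)^2 := by
  rcases lt_or_ge u s with h | h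
  · rw [min_eq_right (h.le.trans hsS), max_eq_right h.le]
    nlinarith
  · rcases le_or_gt u S with h' | h'
    · rw [min_eq_right h', max_eq_left h]
    · rw [min_eq_left h'.le, max_eq_left hsS]
      nlinarith

lemma trunc_sq_eq {S s t u : ℝ} (hsS : s ≤ S) (h1 : s ≤ t) (h2 : t ≤ S)
    (heq : (t - max (min S u) s)^2 = (t - u)^2) : s ≤ u ∧ u ≤ S := by
  rcases lt_or_ge u s with h | h
  · rw [min_eq_right (h.le.trans hsS), max_eq_right h.le] at heq
    nlinarith
  · rcases le_or_gt u S with h' | h'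
    · exact ⟨h, h'⟩
    · rw [min_eq_left h'.le, max_eq_left hsS] at heq
      constructor <;> nlinarith

end helpers

section measlim

variable (P : Measure ℝ) [IsFiniteMeasure P] (a : ℝ)

lemma Fmono : Monotone (fun t => (P (Ioo a t)).toReal) := fun u v huv =>
  ENNReal.toReal_mono (measure_ne_top _ _) (measure_mono (Ioo_subset_Ioo le_rfl huv))

lemma seq_tendsto_left (x : ℝ) :
    Tendsto (fun n : ℕ => x - 1/(n+1)) atTop (𝓝[<] x) := by
  rw [tendsto_nhdsWithin_iff]
  constructor
  · simpa using tendsto_const_nhds.sub (tendsto_one_div_add_atTop_nhds_zero_nat (𝕜 := ℝ))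
  · filter_upwards with n
    have : (0:ℝ) < 1/(n+1) := by positivity
    simp only [mem_Iio]; linarith

lemma seq_tendsto_right (x : ℝ) :
    Tendsto (fun n : ℕ => x + 1/(n+1)) atTop (𝓝[>] x) := by
  rw [tendsto_nhdsWithin_iff]
  constructor
  · simpa using tendsto_const_nhds.add (tendsto_one_div_add_atTop_nhds_zero_nat (𝕜 := ℝ))
  · filter_upwards with n
    have : (0:ℝ) < 1/(n+1) := by positivity
    simp only [mem_Ioi]; linarith

lemma tendsto_Ioo_left (x : ℝ) :
    Tendsto (fun t => (P (Ioo a t)).toReal) (𝓝[<] x) (𝓝 ((P (Ioo a x)).toReal)) := by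
  have hm := Fmono P a
  have h0 := hm.tendsto_leftLim x
  suffices h : leftLim (fun t => (P (Ioo a t)).toReal) x = (P (Ioo a x)).toReal by rwa [h] at h0
  have hU : (⋃ n : ℕ, Ioo a (x - 1/(n+1))) = Ioo a x := by
    ext y
    simp only [mem_iUnion, mem_Ioo]
    constructor
    · rintro ⟨n, hy1, hy2⟩
      have : (0:ℝ) < 1/(n+1) := by positivity
      exact ⟨hy1, by linarith⟩
    · rintro ⟨hy1, hy2⟩
      obtain ⟨n, hn⟩ := exists_nat_one_div_lt (ε := x - y) (by linarith)
      exact ⟨n, hy1, by push_cast at hn ⊢; linarith⟩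
  have hsets : Monotone (fun n : ℕ => Ioo a (x - 1/(n+1))) := by
    intro m n hmn
    apply Ioo_subset_Ioo le_rfl
    have : (1:ℝ)/(n+1) ≤ 1/(m+1) := by
      apply one_div_le_one_div_of_le (by positivity)
      push_cast; exact_mod_cast by exact_mod_cast add_le_add_left (Nat.cast_le.2 hmn) 1
    linarith
  have h1 : Tendsto (fun n : ℕ => P (Ioo a (x - 1/(n+1)))) atTop (𝓝 (P (Ioo a x))) := by
    have := tendsto_measure_iUnion_atTop (μ := P) hsets
    rwa [hU] at this
  have h2 : Tendsto (fun n : ℕ => (P (Ioo a (x - 1/(n+1)))).toReal) atTop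
      (𝓝 ((P (Ioo a x)).toReal)) :=
    (ENNReal.tendsto_toReal (measure_ne_top _ _)).comp h1
  have h3 : Tendsto (fun n : ℕ => (P (Ioo a (x - 1/(n+1)))).toReal) atTop
      (𝓝 (leftLim (fun t => (P (Ioo a t)).toReal) x)) := h0.comp (seq_tendsto_left x)
  exact tendsto_nhds_unique h3 h2

lemma tendsto_Ioo_right (x : ℝ) :
    Tendsto (fun t => (P (Ioo a t)).toReal) (𝓝[>] x) (𝓝 ((P (Ioc a x)).toReal)) := by
  have hm := Fmono P a
  have h0 := hm.tendsto_rightLim x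
  suffices h : rightLim (fun t => (P (Ioo a t)).toReal) x = (P (Ioc a x)).toReal by rwa [h] at h0
  have hU : (⋂ n : ℕ, Ioo a (x + 1/(n+1))) = Ioc a x := by
    ext y
    simp only [mem_iInter, mem_Ioo, mem_Ioc]
    constructor
    · rintro h
      refine ⟨(h 0).1, ?_⟩
      by_contra hc
      push_neg at hc
      obtain ⟨n, hn⟩ := exists_nat_one_div_lt (ε := y - x) (by linarith)
      have := (h n).2
      push_cast at hn ⊢
      linarith
    · rintro ⟨hy1, hy2⟩ n
      have : (0:ℝ) < 1/(n+1) := by positivity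
      exact ⟨hy1, by linarith⟩
  have hsets : Antitone (fun n : ℕ => Ioo a (x + 1/(n+1))) := by
    intro m n hmn
    apply Ioo_subset_Ioo le_rfl
    have : (1:ℝ)/(n+1) ≤ 1/(m+1) := by
      apply one_div_le_one_div_of_le (by positivity)
      exact_mod_cast add_le_add_left (Nat.cast_le.2 hmn) 1
    linarith
  have h1 : Tendsto (fun n : ℕ => P (Ioo a (x + 1/(n+1)))) atTop (𝓝 (P (Ioc a x))) := by
    have := tendsto_measure_iInter_atTop (μ := P)
      (fun n => measurableSet_Ioo.nullMeasurableSet) hsets ⟨0, measure_ne_top _ _⟩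
    rwa [hU] at this
  have h2 := (ENNReal.tendsto_toReal (measure_ne_top P (Ioc a x))).comp h1
  have h3 : Tendsto (fun n : ℕ => (P (Ioo a (x + 1/(n+1)))).toReal) atTop
      (𝓝 (rightLim (fun t => (P (Ioo a t)).toReal) x)) := h0.comp (seq_tendsto_right x)
  exact tendsto_nhds_unique h3 h2

end measlim

section tvsub

lemma coe_nnreal_le_measure {r : ℝ} (hr : 0 ≤ r) (M : Measure ℝ) [IsFiniteMeasure M] (F : Set ℝ)
    (hle : r ≤ (M F).toReal) : (ENNReal.ofNNReal ⟨r, hr⟩) ≤ M F := by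
  have h := ENNReal.ofReal_le_ofReal hle
  rw [ENNReal.ofReal_toReal (measure_ne_top M F), ENNReal.ofReal_eq_coe_nnreal hr] at h
  exact h

lemma totalVariation_sub_le (A B : Measure ℝ) [IsFiniteMeasure A] [IsFiniteMeasure B] :
    (A.toSignedMeasure - B.toSignedMeasure).totalVariation ≤ A + B := by
  set σ := A.toSignedMeasure - B.toSignedMeasure with hσ
  rw [Measure.le_iff]
  intro E hE
  obtain ⟨i, hi₁, hi₂, hi₃, hpos, hneg⟩ := σ.toJordanDecomposition_spec
  have happ : ∀ (F : Set ℝ), MeasurableSet F → σ F = (A F).toReal - (B F).toReal :=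
    fun F hF => Measure.toSignedMeasure_sub_apply hF
  have h1 : σ.totalVariation E
      = σ.toJordanDecomposition.posPart E + σ.toJordanDecomposition.negPart E := rfl
  rw [h1, hpos, hneg, SignedMeasure.toMeasureOfZeroLE_apply _ hi₂ hi₁ hE,
    SignedMeasure.toMeasureOfLEZero_apply _ hi₃ hi₁.compl hE]
  have hApos : σ (i ∩ E) ≤ (A E).toReal := by
    rw [happ _ (hi₁.inter hE)]
    have : (A (i ∩ E)).toReal ≤ (A E).toReal :=
      ENNReal.toReal_mono (measure_ne_top _ _) (measure_mono inter_subset_right)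
    have h0 : (0:ℝ) ≤ (B (i ∩ E)).toReal := ENNReal.toReal_nonneg
    linarith
  have hBneg : -σ (iᶜ ∩ E) ≤ (B E).toReal := by
    rw [happ _ (hi₁.compl.inter hE)]
    have : (B (iᶜ ∩ E)).toReal ≤ (B E).toReal :=
      ENNReal.toReal_mono (measure_ne_top _ _) (measure_mono inter_subset_right)
    have h0 : (0:ℝ) ≤ (A (iᶜ ∩ E)).toReal := ENNReal.toReal_nonneg
    linarith
  rw [Measure.add_apply]
  exact add_le_add (coe_nnreal_le_measure _ A E hApos) (coe_nnreal_le_measure _ B E hBneg)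

end tvsub

lemma stieltjes_package {a b : ℝ} (hab : a < b) (h : ℝ → ℝ) (hm : Monotone h)
    (hleft : ∀ x, Tendsto h (𝓝[<] x) (𝓝 (h x)))
    (hra : Tendsto h (𝓝[>] a) (𝓝 0))
    (h0 : ∀ u, u ≤ a → h u = 0)
    (hconst : ∀ u, b ≤ u → h u = h b) :
    ∃ M : Measure ℝ, IsFiniteMeasure M ∧
      (∀ x, M (Ioo a x) = ENNReal.ofReal (h x)) ∧
      (∀ x, M (Ioc a x) = ENNReal.ofReal (rightLim h x)) := by
  set sp := hm.stieltjesFunction with hsp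
  have hsp_eq : ∀ t, sp t = rightLim h t := fun t => hm.stieltjesFunction_eq t
  have hne : ∀ x : ℝ, 𝓝[>] x ≠ ⊥ := fun x => (inferInstance : (𝓝[>] x).NeBot).ne'
  have hne' : ∀ x : ℝ, 𝓝[<] x ≠ ⊥ := fun x => (inferInstance : (𝓝[<] x).NeBot).ne'
  have hleftLim : ∀ x, leftLim (fun t => sp t) x = h x := by
    intro x
    apply leftLim_eq_of_tendsto
    apply tendsto_of_tendsto_of_tendsto_of_le_of_le' (hleft x) tendsto_const_nhds
    · filter_upwards with t
      rw [hsp_eq]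
      exact hm.le_rightLim le_rfl
    · filter_upwards [self_mem_nhdsWithin] with t ht
      rw [hsp_eq]
      exact hm.rightLim_le ht
  have hsp_a : sp a = 0 := by
    rw [hsp_eq]
    exact rightLim_eq_of_tendsto hra
  have hsp_low : ∀ t, t < a → sp t = 0 := by
    intro t ht
    rw [hsp_eq]
    apply rightLim_eq_of_tendsto
    apply tendsto_const_nhds.congr'
    filter_upwards [Ioo_mem_nhdsGT_of_mem ⟨le_rfl, ht⟩] with u hu
    exact (h0 u hu.2.le).symm
  have hsp_high : ∀ t, b ≤ t → sp t = h b := by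
    intro t ht
    rw [hsp_eq]
    apply rightLim_eq_of_tendsto
    apply tendsto_const_nhds.congr'
    filter_upwards [self_mem_nhdsWithin] with u hu
    exact (hconst u (ht.trans (le_of_lt hu))).symm
  have hsp_bot : Tendsto (fun t => sp t) atBot (𝓝 0) := by
    apply tendsto_const_nhds.congr'
    filter_upwards [eventually_lt_atBot a] with t ht
    exact (hsp_low t ht).symm
  have hsp_top : Tendsto (fun t => sp t) atTop (𝓝 (h b)) := by
    apply tendsto_const_nhds.congr'
    filter_upwards [eventually_ge_atTop b] with t ht
    exact (hsp_high t ht).symm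
  refine ⟨sp.measure, ⟨?_⟩, ?_, ?_⟩
  · rw [StieltjesFunction.measure_univ sp hsp_bot hsp_top]
    exact ENNReal.ofReal_lt_top
  · intro x
    rw [StieltjesFunction.measure_Ioo, hleftLim x, hsp_a, sub_zero]
  · intro x
    rw [StieltjesFunction.measure_Ioc, hsp_a, sub_zero, hsp_eq]

end AuxLemmas

/-- maximum principle for weighted TV denoising: with
`S = esssup f`, `s = essinf f` finite, the truncation `u* = max(min(S, u), s)` of a BV
function `u` is again BV and has energy no larger than that of `u`; consequently any
minimizer of the energy lies a.e. between `essinf f` and `esssup f`. -/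
theorem truncation_decreases_energy
    (a b : ℝ) (hab : a < b) (f α : ℝ → ℝ)
    (hf : MeasureTheory.MemLp f 2 (MeasureTheory.volume.restrict (Set.Ioo a b)))
    (hαc : ContinuousOn α (Set.Icc a b)) (hαpos : ∀ x ∈ Set.Icc a b, 0 < α x)
    (S s : ℝ)
    (hS : S = essSup f (MeasureTheory.volume.restrict (Set.Ioo a b)))
    (hs : s = essInf f (MeasureTheory.volume.restrict (Set.Ioo a b)))
    (hbdd : ∀ᵐ x ∂(MeasureTheory.volume.restrict (Set.Ioo a b)), s ≤ f x ∧ f x ≤ S)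
    (p : BVRep) :
    (∃ q : BVRep,
        (∀ x ∈ Set.Ioo a b, BVRep.fn a q x = max (min S (BVRep.fn a p x)) s) ∧
        wEnergy a b f α q ≤ wEnergy a b f α p) ∧
      ((∀ q : BVRep, wEnergy a b f α p ≤ wEnergy a b f α q) →
        ∀ᵐ x ∂(MeasureTheory.volume.restrict (Set.Ioo a b)),
          s ≤ BVRep.fn a p x ∧ BVRep.fn a p x ≤ S) := by
  classical
  -- basic facts about the ambient measure
  haveI hfinr : IsFiniteMeasure (MeasureTheory.volume.restrict (Set.Ioo a b)) := by
    constructor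
    rw [Measure.restrict_apply_univ]
    exact measure_Ioo_lt_top
  have hne0 : (MeasureTheory.volume.restrict (Set.Ioo a b)) ≠ 0 := by
    intro h
    have h2 : (MeasureTheory.volume.restrict (Set.Ioo a b)) univ = 0 := by rw [h]; simp
    rw [Measure.restrict_apply_univ, Real.volume_Ioo] at h2
    rw [ENNReal.ofReal_eq_zero] at h2
    linarith
  have hsS : s ≤ S := by
    haveI : (ae (MeasureTheory.volume.restrict (Set.Ioo a b))).NeBot := ae_neBot.2 hne0
    obtain ⟨x, hx1, hx2⟩ := hbdd.exists
    exact hx1.trans hx2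
  -- Jordan decomposition of p.μ
  set P := p.μ.toJordanDecomposition.posPart with hP
  set N := p.μ.toJordanDecomposition.negPart with hN
  set T : ℝ → ℝ := fun t => max (min S t) s with hT
  have hTcont : Continuous T := (continuous_const.min continuous_id).max continuous_const
  set Fp : ℝ → ℝ := fun t => (P (Ioo a t)).toReal with hFp
  set Fn : ℝ → ℝ := fun t => (N (Ioo a t)).toReal with hFn
  have happ : ∀ E : Set ℝ, MeasurableSet E → p.μ E = (P E).toReal - (N E).toReal := by
    intro E hE
    conv_lhs => rw [← p.μ.toSignedMeasure_toJordanDecomposition]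
    rw [JordanDecomposition.toSignedMeasure, Measure.toSignedMeasure_sub_apply hE]
    rfl
  have hfnp : ∀ x, BVRep.fn a p x = p.c + (Fp x - Fn x) := by
    intro x
    rw [BVRep.fn, happ _ measurableSet_Ioo]
  set G : ℝ → ℝ := fun t => T (p.c + (Fp t - Fn t)) with hG
  set hraw : ℝ → ℝ := fun t => (Fp t + Fn t + (G t - T p.c)) / 2 with hhraw
  set mraw : ℝ → ℝ := fun t => (Fp t + Fn t - (G t - T p.c)) / 2 with hmraw
  set hpl : ℝ → ℝ := fun t => hraw (min t b) with hhpl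
  set hmn : ℝ → ℝ := fun t => mraw (min t b) with hhmn
  have hFpm : Monotone Fp := Fmono P a
  have hFnm : Monotone Fn := Fmono N a
  have hkey : ∀ u v : ℝ, u ≤ v → |G v - G u| ≤ (Fp v - Fp u) + (Fn v - Fn u) := by
    intro u v huv
    have h1 : |G v - G u| ≤ |(p.c + (Fp v - Fn v)) - (p.c + (Fp u - Fn u))| :=
      trunc_lipschitz S s _ _
    have h2 : |(p.c + (Fp v - Fn v)) - (p.c + (Fp u - Fn u))|
        ≤ (Fp v - Fp u) + (Fn v - Fn u) := by
      have e1 : Fp u ≤ Fp v := hFpm huv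
      have e2 : Fn u ≤ Fn v := hFnm huv
      rw [abs_le]
      constructor <;> [skip; skip] <;> nlinarith [abs_nonneg ((p.c + (Fp v - Fn v)) - (p.c + (Fp u - Fn u)))]
    exact h1.trans h2
  have hplm : Monotone hpl := by
    intro u v huv
    have hmm : min u b ≤ min v b := min_le_min huv le_rfl
    have hk := (abs_le.1 (hkey _ _ hmm)).1
    have e1 : Fp (min u b) ≤ Fp (min v b) := hFpm hmm
    have e2 : Fn (min u b) ≤ Fn (min v b) := hFnm hmm
    simp only [hhpl, hhraw]
    linarith
  have hmnm : Monotone hmn := by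
    intro u v huv
    have hmm : min u b ≤ min v b := min_le_min huv le_rfl
    have hk := (abs_le.1 (hkey _ _ hmm)).2
    have e1 : Fp (min u b) ≤ Fp (min v b) := hFpm hmm
    have e2 : Fn (min u b) ≤ Fn (min v b) := hFnm hmm
    simp only [hhmn, hmraw]
    linarith
  have hzero : ∀ t, t ≤ a → Fp t = 0 ∧ Fn t = 0 ∧ G t = T p.c := by
    intro t ht
    have hIoo : Ioo a t = (∅ : Set ℝ) := Ioo_eq_empty (by intro h; linarith [h.trans_le ht])
    refine ⟨?_, ?_, ?_⟩
    · simp only [hFp, hIoo, measure_empty, ENNReal.toReal_zero]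
    · simp only [hFn, hIoo, measure_empty, ENNReal.toReal_zero]
    · simp only [hG, hFp, hFn, hIoo, measure_empty, ENNReal.toReal_zero, sub_zero, add_zero,
        sub_self]
  have hraw_nonneg : ∀ t, 0 ≤ hraw t := by
    intro t
    rcases le_total t a with h | h
    · obtain ⟨e1, e2, e3⟩ := hzero t h
      simp only [hhraw, e1, e2, e3, sub_self, add_zero, zero_add, zero_div, le_refl]
    · have hk := (abs_le.1 (hkey a t h)).1
      obtain ⟨e1, e2, e3⟩ := hzero a le_rfl
      rw [e1, e2, e3] at hk
      simp only [hhraw]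
      linarith
  have hmraw_nonneg : ∀ t, 0 ≤ mraw t := by
    intro t
    rcases le_total t a with h | h
    · obtain ⟨e1, e2, e3⟩ := hzero t h
      simp only [hmraw, e1, e2, e3, sub_self, add_zero, zero_add, zero_div, le_refl, sub_zero]
    · have hk := (abs_le.1 (hkey a t h)).2
      obtain ⟨e1, e2, e3⟩ := hzero a le_rfl
      rw [e1, e2, e3] at hk
      simp only [hmraw]
      linarith
  have hpl_nonneg : ∀ t, 0 ≤ hpl t := fun t => hraw_nonneg _
  have hmn_nonneg : ∀ t, 0 ≤ hmn t := fun t => hmraw_nonneg _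
  -- left continuity of the raw functions
  have hG_left : ∀ x, Tendsto G (𝓝[<] x) (𝓝 (G x)) := by
    intro x
    exact (hTcont.tendsto _).comp
      (tendsto_const_nhds.add ((tendsto_Ioo_left P a x).sub (tendsto_Ioo_left N a x)))
  have hraw_left : ∀ x, Tendsto hraw (𝓝[<] x) (𝓝 (hraw x)) := by
    intro x
    exact ((((tendsto_Ioo_left P a x).add (tendsto_Ioo_left N a x)).add
      ((hG_left x).sub tendsto_const_nhds)).div_const 2)
  have hmraw_left : ∀ x, Tendsto mraw (𝓝[<] x) (𝓝 (mraw x)) := by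
    intro x
    exact ((((tendsto_Ioo_left P a x).add (tendsto_Ioo_left N a x)).sub
      ((hG_left x).sub tendsto_const_nhds)).div_const 2)
  -- right limits of the raw functions
  have hraw_right : ∀ x, Tendsto hraw (𝓝[>] x)
      (𝓝 (((P (Ioc a x)).toReal + (N (Ioc a x)).toReal +
        (T (p.c + ((P (Ioc a x)).toReal - (N (Ioc a x)).toReal)) - T p.c)) / 2)) := by
    intro x
    exact ((((tendsto_Ioo_right P a x).add (tendsto_Ioo_right N a x)).add
      (((hTcont.tendsto _).comp (tendsto_const_nhds.add
        ((tendsto_Ioo_right P a x).sub (tendsto_Ioo_right N a x)))).sub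
        tendsto_const_nhds)).div_const 2)
  have hmraw_right : ∀ x, Tendsto mraw (𝓝[>] x)
      (𝓝 (((P (Ioc a x)).toReal + (N (Ioc a x)).toReal -
        (T (p.c + ((P (Ioc a x)).toReal - (N (Ioc a x)).toReal)) - T p.c)) / 2)) := by
    intro x
    exact ((((tendsto_Ioo_right P a x).add (tendsto_Ioo_right N a x)).sub
      (((hTcont.tendsto _).comp (tendsto_const_nhds.add
        ((tendsto_Ioo_right P a x).sub (tendsto_Ioo_right N a x)))).sub
        tendsto_const_nhds)).div_const 2)
  -- transfer to the clamped functions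
  have clamp_left : ∀ (g : ℝ → ℝ), (∀ x, Tendsto g (𝓝[<] x) (𝓝 (g x))) →
      ∀ x, Tendsto (fun t => g (min t b)) (𝓝[<] x) (𝓝 (g (min x b))) := by
    intro g hg x
    rcases le_or_gt x b with hxb | hbx
    · rw [min_eq_left hxb]
      apply (hg x).congr'
      filter_upwards [self_mem_nhdsWithin] with t ht
      rw [min_eq_left ((le_of_lt ht).trans hxb)]
    · rw [min_eq_right hbx.le]
      apply tendsto_const_nhds.congr'
      filter_upwards [Ioo_mem_nhdsLT_of_mem ⟨hbx, le_rfl⟩] with t ht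
      rw [min_eq_right ht.1.le]
  have hpl_left : ∀ x, Tendsto hpl (𝓝[<] x) (𝓝 (hpl x)) := clamp_left hraw hraw_left
  have hmn_left : ∀ x, Tendsto hmn (𝓝[<] x) (𝓝 (hmn x)) := clamp_left mraw hmraw_left
  have clamp_right : ∀ (g : ℝ → ℝ) (x : ℝ) (l : ℝ), x < b → Tendsto g (𝓝[>] x) (𝓝 l) →
      Tendsto (fun t => g (min t b)) (𝓝[>] x) (𝓝 l) := by
    intro g x l hxb hg
    apply hg.congr'
    filter_upwards [Ioo_mem_nhdsGT_of_mem ⟨le_rfl, hxb⟩] with t ht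
    rw [min_eq_left ht.2.le]
  -- right limit at a is 0
  have hIocaa : Ioc a a = (∅ : Set ℝ) := Ioc_self a
  have hpl_right_a : Tendsto hpl (𝓝[>] a) (𝓝 0) := by
    have := clamp_right hraw a _ hab (hraw_right a)
    rw [hIocaa] at this
    simpa using this
  have hmn_right_a : Tendsto hmn (𝓝[>] a) (𝓝 0) := by
    have := clamp_right mraw a _ hab (hmraw_right a)
    rw [hIocaa] at this
    simpa using this
  have hpl_zero : ∀ u, u ≤ a → hpl u = 0 := by
    intro u hu
    obtain ⟨e1, e2, e3⟩ := hzero u hu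
    simp only [hhpl, hhraw]
    rw [min_eq_left (hu.trans hab.le), e1, e2, e3]
    ring
  have hmn_zero : ∀ u, u ≤ a → hmn u = 0 := by
    intro u hu
    obtain ⟨e1, e2, e3⟩ := hzero u hu
    simp only [hhmn, hmraw]
    rw [min_eq_left (hu.trans hab.le), e1, e2, e3]
    ring
  have hpl_const : ∀ u, b ≤ u → hpl u = hpl b := by
    intro u hu
    simp only [hhpl]
    rw [min_eq_right hu, min_self]
  have hmn_const : ∀ u, b ≤ u → hmn u = hmn b := by
    intro u hu
    simp only [hhmn]
    rw [min_eq_right hu, min_self]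
  -- the Stieltjes measures
  obtain ⟨Mp, hMpfin, hMpIoo, hMpIoc⟩ :=
    stieltjes_package hab hpl hplm hpl_left hpl_right_a hpl_zero hpl_const
  obtain ⟨Mm, hMmfin, hMmIoo, hMmIoc⟩ :=
    stieltjes_package hab hmn hmnm hmn_left hmn_right_a hmn_zero hmn_const
  haveI := hMpfin
  haveI := hMmfin
  set ν : SignedMeasure ℝ := Mp.toSignedMeasure - Mm.toSignedMeasure with hν
  set q : BVRep := ⟨T p.c, ν⟩ with hq
  -- the representative property
  have hq1 : ∀ x ∈ Ioo a b, BVRep.fn a q x = max (min S (BVRep.fn a p x)) s := by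
    intro x hx
    have : BVRep.fn a q x = T p.c + ((Mp (Ioo a x)).toReal - (Mm (Ioo a x)).toReal) := by
      rw [BVRep.fn]
      simp only [hq]
      rw [hν, Measure.toSignedMeasure_sub_apply measurableSet_Ioo]
      rfl
    rw [this, hMpIoo, hMmIoo, ENNReal.toReal_ofReal (hpl_nonneg x),
      ENNReal.toReal_ofReal (hmn_nonneg x)]
    have hmin : min x b = x := min_eq_left hx.2.le
    have : hpl x - hmn x = G x - T p.c := by
      simp only [hhpl, hhmn, hhraw, hmraw, hmin]
      ring
    rw [this, hfnp x]
    simp only [hG, hT]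
    ring_nf
  -- total variation of p.μ
  have hTVapp : ∀ E : Set ℝ, p.μ.totalVariation E = P E + N E := by
    intro E
    rw [SignedMeasure.totalVariation, Measure.add_apply]
  haveI hTVfin : IsFiniteMeasure p.μ.totalVariation := by
    constructor
    rw [hTVapp]
    exact ENNReal.add_lt_top.2 ⟨measure_lt_top _ _, measure_lt_top _ _⟩
  -- key comparison of measures on (a,b)
  have hVp : 0 ≤ rightLim hpl := by
    intro x
    exact (hpl_nonneg x).trans (hplm.le_rightLim le_rfl)
  have hVm : 0 ≤ rightLim hmn := by
    intro x
    exact (hmn_nonneg x).trans (hmnm.le_rightLim le_rfl)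
  have hne : ∀ x : ℝ, 𝓝[>] x ≠ ⊥ := fun x => (inferInstance : (𝓝[>] x).NeBot).ne'
  have Meq : (Mp + Mm).restrict (Ioo a b) = p.μ.totalVariation.restrict (Ioo a b) := by
    apply Measure.ext_of_Iic
    intro x
    rw [Measure.restrict_apply measurableSet_Iic, Measure.restrict_apply measurableSet_Iic]
    rcases le_or_gt x a with hxa | hax
    · have hset : Iic x ∩ Ioo a b = (∅ : Set ℝ) := by
        ext y
        simp only [mem_inter_iff, mem_Iic, mem_Ioo, mem_empty_iff_false, iff_false, not_and]
        intro h1 h2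
        linarith [h1, h2]
      rw [hset]
      simp
    rcases lt_or_ge x b with hxb | hbx
    · have hset : Iic x ∩ Ioo a b = Ioc a x := by
        ext y
        simp only [mem_inter_iff, mem_Iic, mem_Ioo, mem_Ioc]
        constructor
        · rintro ⟨h1, h2, h3⟩; exact ⟨h2, h1⟩
        · rintro ⟨h1, h2⟩; exact ⟨h2, h1, lt_of_le_of_lt h2 hxb⟩
      rw [hset, Measure.add_apply, hMpIoc, hMmIoc, hTVapp]
      have hrp : rightLim hpl x = ((P (Ioc a x)).toReal + (N (Ioc a x)).toReal +
          (T (p.c + ((P (Ioc a x)).toReal - (N (Ioc a x)).toReal)) - T p.c)) / 2 :=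
        rightLim_eq_of_tendsto (clamp_right hraw x _ hxb (hraw_right x))
      have hrm : rightLim hmn x = ((P (Ioc a x)).toReal + (N (Ioc a x)).toReal -
          (T (p.c + ((P (Ioc a x)).toReal - (N (Ioc a x)).toReal)) - T p.c)) / 2 :=
        rightLim_eq_of_tendsto (clamp_right mraw x _ hxb (hmraw_right x))
      rw [← ENNReal.ofReal_add (hVp x) (hVm x), hrp, hrm]
      have hsum : ((P (Ioc a x)).toReal + (N (Ioc a x)).toReal +
          (T (p.c + ((P (Ioc a x)).toReal - (N (Ioc a x)).toReal)) - T p.c)) / 2 +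
          ((P (Ioc a x)).toReal + (N (Ioc a x)).toReal -
          (T (p.c + ((P (Ioc a x)).toReal - (N (Ioc a x)).toReal)) - T p.c)) / 2
          = (P (Ioc a x)).toReal + (N (Ioc a x)).toReal := by ring
      rw [hsum, ENNReal.ofReal_add ENNReal.toReal_nonneg ENNReal.toReal_nonneg,
        ENNReal.ofReal_toReal (measure_ne_top _ _), ENNReal.ofReal_toReal (measure_ne_top _ _)]
    · have hset : Iic x ∩ Ioo a b = Ioo a b := by
        ext y
        simp only [mem_inter_iff, mem_Iic, mem_Ioo]
        constructor
        · rintro ⟨h1, h2, h3⟩; exact ⟨h2, h3⟩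
        · rintro ⟨h1, h2⟩; exact ⟨(le_of_lt h2).trans hbx, h1, h2⟩
      rw [hset, Measure.add_apply, hMpIoo, hMmIoo, hTVapp]
      rw [← ENNReal.ofReal_add (hpl_nonneg b) (hmn_nonneg b)]
      have hsum : hpl b + hmn b = (P (Ioo a b)).toReal + (N (Ioo a b)).toReal := by
        simp only [hhpl, hhmn, hhraw, hmraw, min_self]
        ring
      rw [hsum, ENNReal.ofReal_add ENNReal.toReal_nonneg ENNReal.toReal_nonneg,
        ENNReal.ofReal_toReal (measure_ne_top _ _), ENNReal.ofReal_toReal (measure_ne_top _ _)]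
  have hTVle : ν.totalVariation.restrict (Ioo a b) ≤ p.μ.totalVariation.restrict (Ioo a b) := by
    rw [← Meq]
    exact Measure.restrict_mono subset_rfl (totalVariation_sub_le Mp Mm)
  -- integrability of α on (a,b) and monotonicity of the weighted TV term
  have hαint : Integrable α (p.μ.totalVariation.restrict (Ioo a b)) := by
    obtain ⟨x₀, hx₀mem, hx₀⟩ := isCompact_Icc.exists_isMaxOn (α := ℝ)
      ⟨a, left_mem_Icc.2 hab.le⟩ hαc.norm
    have hC : ∀ y ∈ Icc a b, ‖α y‖ ≤ ‖α x₀‖ := by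
      intro y hy
      have := hx₀ hy
      simpa using this
    have asm : AEStronglyMeasurable α (p.μ.totalVariation.restrict (Ioo a b)) :=
      (hαc.mono Ioo_subset_Icc_self).aestronglyMeasurable measurableSet_Ioo
    haveI : IsFiniteMeasure (p.μ.totalVariation.restrict (Ioo a b)) :=
      inferInstance
    apply memLp_one_iff_integrable.1
    apply MemLp.of_bound asm ‖α x₀‖
    filter_upwards [ae_restrict_mem measurableSet_Ioo] with y hy
    exact hC y (Ioo_subset_Icc_self hy)
  have hαnn : 0 ≤ᵐ[p.μ.totalVariation.restrict (Ioo a b)] α := by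
    filter_upwards [ae_restrict_mem measurableSet_Ioo] with y hy
    exact (hαpos y (Ioo_subset_Icc_self hy)).le
  have hTVint : (∫ x in Ioo a b, α x ∂ν.totalVariation)
      ≤ ∫ x in Ioo a b, α x ∂p.μ.totalVariation :=
    integral_mono_measure hTVle hαnn hαint
  -- fidelity term
  have memp : MemLp (BVRep.fn a p) 2 (MeasureTheory.volume.restrict (Set.Ioo a b)) := by
    have hmeas : Measurable (BVRep.fn a p) := by
      have he : BVRep.fn a p = fun x => p.c + (Fp x - Fn x) := funext hfnp
      rw [he]
      exact measurable_const.add (hFpm.measurable.sub hFnm.measurable)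
    apply MemLp.of_bound hmeas.aestronglyMeasurable (|p.c| + ((P univ).toReal + (N univ).toReal))
    apply ae_of_all
    intro x
    rw [Real.norm_eq_abs, hfnp x]
    have b1 : Fp x ≤ (P univ).toReal :=
      ENNReal.toReal_mono (measure_ne_top _ _) (measure_mono (subset_univ _))
    have b2 : Fn x ≤ (N univ).toReal :=
      ENNReal.toReal_mono (measure_ne_top _ _) (measure_mono (subset_univ _))
    have b3 : (0:ℝ) ≤ Fp x := ENNReal.toReal_nonneg
    have b4 : (0:ℝ) ≤ Fn x := ENNReal.toReal_nonneg
    have h5 := abs_add_le p.c (Fp x - Fn x)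
    have h6 : |Fp x - Fn x| ≤ (P univ).toReal + (N univ).toReal :=
      abs_le.2 ⟨by linarith, by linarith⟩
    linarith
  have memq : MemLp (BVRep.fn a q) 2 (MeasureTheory.volume.restrict (Set.Ioo a b)) := by
    have hfnq : ∀ x, BVRep.fn a q x
        = T p.c + ((Mp (Ioo a x)).toReal - (Mm (Ioo a x)).toReal) := by
      intro x
      rw [BVRep.fn]
      simp only [hq]
      rw [hν, Measure.toSignedMeasure_sub_apply measurableSet_Ioo]
      rfl
    have hmeas : Measurable (BVRep.fn a q) := by
      have he : BVRep.fn a q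
          = fun x => T p.c + ((Mp (Ioo a x)).toReal - (Mm (Ioo a x)).toReal) := funext hfnq
      rw [he]
      exact measurable_const.add ((Fmono Mp a).measurable.sub (Fmono Mm a).measurable)
    apply MemLp.of_bound hmeas.aestronglyMeasurable
      (|T p.c| + ((Mp univ).toReal + (Mm univ).toReal))
    apply ae_of_all
    intro x
    rw [Real.norm_eq_abs, hfnq x]
    have b1 : (Mp (Ioo a x)).toReal ≤ (Mp univ).toReal :=
      ENNReal.toReal_mono (measure_ne_top _ _) (measure_mono (subset_univ _))
    have b2 : (Mm (Ioo a x)).toReal ≤ (Mm univ).toReal :=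
      ENNReal.toReal_mono (measure_ne_top _ _) (measure_mono (subset_univ _))
    have b3 : (0:ℝ) ≤ (Mp (Ioo a x)).toReal := ENNReal.toReal_nonneg
    have b4 : (0:ℝ) ≤ (Mm (Ioo a x)).toReal := ENNReal.toReal_nonneg
    have h5 := abs_add_le (T p.c) ((Mp (Ioo a x)).toReal - (Mm (Ioo a x)).toReal)
    have h6 : |(Mp (Ioo a x)).toReal - (Mm (Ioo a x)).toReal|
        ≤ (Mp univ).toReal + (Mm univ).toReal := abs_le.2 ⟨by linarith, by linarith⟩
    linarith
  have intp : Integrable (fun x => (f x - BVRep.fn a p x)^2)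
      (MeasureTheory.volume.restrict (Set.Ioo a b)) := by
    have h := (memLp_two_iff_integrable_sq (hf.sub memp).aestronglyMeasurable).1 (hf.sub memp)
    simpa using h
  have intq : Integrable (fun x => (f x - BVRep.fn a q x)^2)
      (MeasureTheory.volume.restrict (Set.Ioo a b)) := by
    have h := (memLp_two_iff_integrable_sq (hf.sub memq).aestronglyMeasurable).1 (hf.sub memq)
    simpa using h
  have key : ∀ᵐ x ∂(MeasureTheory.volume.restrict (Set.Ioo a b)),
      (f x - BVRep.fn a q x)^2 ≤ (f x - BVRep.fn a p x)^2 := by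
    filter_upwards [hbdd, ae_restrict_mem measurableSet_Ioo] with x hx hxab
    rw [hq1 x hxab]
    exact trunc_sq_le hsS hx.1 hx.2 _
  have hfid : (∫ x in Set.Ioo a b, (f x - BVRep.fn a q x)^2)
      ≤ ∫ x in Set.Ioo a b, (f x - BVRep.fn a p x)^2 := integral_mono_ae intq intp key
  have hE : wEnergy a b f α q ≤ wEnergy a b f α p := by
    rw [wEnergy, wEnergy]
    have h1 := hTVint
    have h2 : q.μ = ν := rfl
    rw [h2]
    linarith
  refine ⟨⟨q, hq1, hE⟩, ?_⟩
  intro hmin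
  have hEq : wEnergy a b f α q = wEnergy a b f α p := le_antisymm hE (hmin q)
  have hfid_eq : (∫ x in Set.Ioo a b, (f x - BVRep.fn a q x)^2)
      = ∫ x in Set.Ioo a b, (f x - BVRep.fn a p x)^2 := by
    rw [wEnergy, wEnergy] at hEq
    have h2 : q.μ = ν := rfl
    rw [h2] at hEq
    have h1 := hTVint
    linarith
  have hnn : 0 ≤ᵐ[MeasureTheory.volume.restrict (Set.Ioo a b)]
      fun x => (f x - BVRep.fn a p x)^2 - (f x - BVRep.fn a q x)^2 := by
    filter_upwards [key] with x hx
    simp only [Pi.zero_apply]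
    linarith
  have hint0 : (∫ x in Set.Ioo a b,
      ((f x - BVRep.fn a p x)^2 - (f x - BVRep.fn a q x)^2)) = 0 := by
    rw [integral_sub intp intq]
    linarith
  have hae := (integral_eq_zero_iff_of_nonneg_ae hnn (intp.sub intq)).1 hint0
  filter_upwards [hae, hbdd, ae_restrict_mem measurableSet_Ioo] with x h0 hx hxab
  have h0' : (f x - BVRep.fn a p x)^2 - (f x - BVRep.fn a q x)^2 = 0 := h0
  rw [hq1 x hxab] at h0'
  have heq2 : (f x - max (min S (BVRep.fn a p x)) s)^2 = (f x - BVRep.fn a p x)^2 := by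
    linarith
  exact trunc_sq_eq hsS hx.1 hx.2 heq2
end

section
/- Let Ω = (a,b), f ∈ BV(Ω), and α ∈ C(closure(Ω)) with α > 0. Suppose u ∈ BV(Ω) and v ∈ H¹₀(Ω) satisfy the optimality conditions v′ = f − u a.e. and −v(x) = α(x)·sgn(Du)(x) for |Du|-a.e. x with |v| ≤ α everywhere. If x₁ < x₂ are two points in Ω with sgn(Du)(x₁) = 1 and sgn(Du)(x₂) = −1 (for a continuous representative of sgn(Du) on supp|Du|), and v′ < 0 almost everywhere on (x₁, x₂), then a contradiction follows: v(x₁) = −α(x₁) < 0 < α(x₂) = v(x₂) while v is strictly decreasing on (x₁, x₂). -/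
open MeasureTheory Set

section Aux
open Filter

/-- Averages of a continuous function tend to the value. -/
lemma avg_tendsto {g : ℝ → ℝ} (gcont : Continuous g) (c : ℝ) {h : ℕ → ℝ}
    (hpos : ∀ n, 0 < h n) (hlim : Tendsto h atTop (nhds 0)) :
    Tendsto (fun n => (h n)⁻¹ * ∫ x in c..(c + h n), g x) atTop (nhds (g c)) := by
  set Φ : ℝ → ℝ := fun y => ∫ x in c..y, g x with hΦ
  have hd : HasDerivAt Φ (g c) c := by
    exact intervalIntegral.integral_hasDerivAt_right (gcont.intervalIntegrable _ _)
      (gcont.stronglyMeasurableAtFilter _ _) gcont.continuousAt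
  have hslope := hasDerivAt_iff_tendsto_slope.1 hd
  have htend : Tendsto (fun n => c + h n) atTop (nhdsWithin c {c}ᶜ) := by
    rw [tendsto_nhdsWithin_iff]
    refine ⟨by simpa using tendsto_const_nhds.add hlim, ?_⟩
    exact Eventually.of_forall fun n => by
      simp only [Set.mem_compl_iff, Set.mem_singleton_iff]
      nlinarith [hpos n]
  have := hslope.comp htend
  convert this using 2 with n
  have hΦc : Φ c = 0 := intervalIntegral.integral_same
  simp only [Function.comp, slope_def_field, hΦc, sub_zero, add_sub_cancel_left]
  ring

lemma lipschitz_ftc_le {K : NNReal} {g : ℝ → ℝ} (hg : LipschitzWith K g)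
    {x₁ x₂ : ℝ} (h12 : x₁ < x₂)
    (hneg : ∀ᵐ t ∂volume, t ∈ Set.Ioo x₁ x₂ → deriv g t ≤ 0) :
    g x₂ ≤ g x₁ := by
  have gcont : Continuous g := hg.continuous
  set μ : Measure ℝ := volume.restrict (Set.Ioo x₁ x₂) with hμ
  set h : ℕ → ℝ := fun n => (1 : ℝ) / (n + 1) with hh
  have hpos : ∀ n, 0 < h n := fun n => by positivity
  have hlim : Tendsto h atTop (nhds 0) := tendsto_one_div_add_atTop_nhds_zero_nat
  set F : ℕ → ℝ → ℝ := fun n t => (g (t + h n) - g t) / h n with hF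
  -- a.e. convergence of difference quotients
  have hconv : ∀ᵐ t ∂μ, Tendsto (fun n => F n t) atTop (nhds (deriv g t)) := by
    refine ae_restrict_of_ae ?_
    filter_upwards [hg.ae_differentiableAt] with t ht
    have hslope := hasDerivAt_iff_tendsto_slope.1 ht.hasDerivAt
    have htend : Tendsto (fun n => t + h n) atTop (nhdsWithin t {t}ᶜ) := by
      rw [tendsto_nhdsWithin_iff]
      refine ⟨by simpa using tendsto_const_nhds.add hlim, ?_⟩
      exact Eventually.of_forall fun n => by
        simp only [Set.mem_compl_iff, Set.mem_singleton_iff]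
        nlinarith [hpos n]
    have := hslope.comp htend
    convert this using 2 with n
    simp only [Function.comp, slope_def_field, add_sub_cancel_left, hF]
  -- dominated convergence
  have hmeasF : ∀ n, AEStronglyMeasurable (F n) μ := fun n =>
    (((gcont.comp (continuous_add_right (h n))).sub gcont).div_const _).aestronglyMeasurable
  have hboundInt : Integrable (fun _ : ℝ => (K : ℝ)) μ := by
    refine integrableOn_const ?_
    simp [Real.volume_Ioo]
  have hbound : ∀ n, ∀ᵐ t ∂μ, ‖F n t‖ ≤ (K : ℝ) := by
    intro n
    refine Eventually.of_forall fun t => ?_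
    have := hg.dist_le_mul (t + h n) t
    simp only [Real.dist_eq, add_sub_cancel_left] at this
    rw [hF]
    simp only [Real.norm_eq_abs, abs_div]
    rw [abs_of_pos (hpos n), div_le_iff₀ (hpos n)]
    calc |g (t + h n) - g t| ≤ K * |h n| := this
      _ = K * h n := by rw [abs_of_pos (hpos n)]
  have hderiv_meas : AEStronglyMeasurable (deriv g) μ :=
    (measurable_deriv g).aestronglyMeasurable
  have hDC : Tendsto (fun n => ∫ t, F n t ∂μ) atTop (nhds (∫ t, deriv g t ∂μ)) :=
    tendsto_integral_of_dominated_convergence _ hmeasF hboundInt hbound hconv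
  -- compute ∫ F n ∂μ
  have hInt : ∀ n, ∫ t, F n t ∂μ =
      ((h n)⁻¹ * ∫ x in x₂..(x₂ + h n), g x) - (h n)⁻¹ * ∫ x in x₁..(x₁ + h n), g x := by
    intro n
    have hIoo : ∫ t, F n t ∂μ = ∫ t in x₁..x₂, F n t := by
      rw [intervalIntegral.integral_of_le h12.le, MeasureTheory.integral_Ioc_eq_integral_Ioo]
    have hint1 : IntervalIntegrable (fun x => g (x + h n)) volume x₁ x₂ :=
      (gcont.comp (continuous_add_right (h n))).intervalIntegrable _ _
    have hint2 : IntervalIntegrable g volume x₁ x₂ := gcont.intervalIntegrable _ _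
    have hsplit : ∫ t in x₁..x₂, F n t =
        (h n)⁻¹ * ((∫ x in x₁..x₂, g (x + h n)) - ∫ x in x₁..x₂, g x) := by
      rw [← intervalIntegral.integral_sub hint1 hint2, ← intervalIntegral.integral_const_mul]
      congr 1 with x
      rw [hF]
      ring
    have hshift : (∫ x in x₁..x₂, g (x + h n)) = ∫ x in (x₁ + h n)..(x₂ + h n), g x :=
      intervalIntegral.integral_comp_add_right g (h n)
    have hA : (∫ x in x₁..(x₁ + h n), g x) + (∫ x in (x₁ + h n)..(x₂ + h n), g x)
        = ∫ x in x₁..(x₂ + h n), g x :=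
      intervalIntegral.integral_add_adjacent_intervals
        (gcont.intervalIntegrable _ _) (gcont.intervalIntegrable _ _)
    have hB : (∫ x in x₁..x₂, g x) + (∫ x in x₂..(x₂ + h n), g x)
        = ∫ x in x₁..(x₂ + h n), g x :=
      intervalIntegral.integral_add_adjacent_intervals
        (gcont.intervalIntegrable _ _) (gcont.intervalIntegrable _ _)
    rw [hIoo, hsplit, hshift]
    have : (∫ x in (x₁ + h n)..(x₂ + h n), g x) - (∫ x in x₁..x₂, g x)
        = (∫ x in x₂..(x₂ + h n), g x) - ∫ x in x₁..(x₁ + h n), g x := by linarith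
    rw [this, mul_sub]
  have hlim2 : Tendsto (fun n => ∫ t, F n t ∂μ) atTop (nhds (g x₂ - g x₁)) := by
    simp only [hInt]
    exact (avg_tendsto gcont x₂ hpos hlim).sub (avg_tendsto gcont x₁ hpos hlim)
  have hval : ∫ t, deriv g t ∂μ = g x₂ - g x₁ := tendsto_nhds_unique hDC hlim2
  have hle : ∫ t, deriv g t ∂μ ≤ 0 := by
    have hae : ∀ᵐ t ∂μ, deriv g t ≤ 0 := by
      rw [hμ, MeasureTheory.ae_restrict_iff' measurableSet_Ioo]
      filter_upwards [hneg] with t ht hmem using ht hmem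
    exact integral_nonpos_of_ae hae
  linarith [hval ▸ hle]

end Aux

/-- no oscillations: let `Ω = (a,b)`, `α` continuous and positive on the
closure of `Ω`, and `v` Lipschitz. If at two points `x₁ < x₂` of `Ω` the dual variable
satisfies the sign conditions `v(x₁) = -α(x₁)` and `v(x₂) = α(x₂)` (coming from
`sgn(Du)(x₁) = 1`, `sgn(Du)(x₂) = -1`), while `v' < 0` almost everywhere on `(x₁, x₂)`,
then a contradiction follows: `v(x₁) < 0 < v(x₂)` although `v` is strictly decreasing. -/
theorem no_oscillations_contradiction
    (a b x₁ x₂ : ℝ) (h1 : a < x₁) (h2 : x₁ < x₂) (h3 : x₂ < b)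
    (α v : ℝ → ℝ)
    (hα : ContinuousOn α (Set.Icc a b))
    (hαpos : ∀ x ∈ Set.Icc a b, 0 < α x)
    (K : NNReal) (hv : LipschitzOnWith K v (Set.Icc a b))
    (hv1 : v x₁ = -α x₁) (hv2 : v x₂ = α x₂)
    (hdec : ∀ᵐ t ∂MeasureTheory.volume,
      t ∈ Set.Ioo x₁ x₂ → DifferentiableAt ℝ v t → deriv v t < 0) :
    False := by
  obtain ⟨g, hg, heq⟩ := hv.extend_real
  have hab : a < b := lt_trans (lt_trans h1 h2) h3
  have hx1 : x₁ ∈ Set.Icc a b := ⟨h1.le, (lt_trans h2 h3).le⟩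
  have hx2 : x₂ ∈ Set.Icc a b := ⟨(lt_trans h1 h2).le, h3.le⟩
  have hneg : ∀ᵐ t ∂volume, t ∈ Set.Ioo x₁ x₂ → deriv g t ≤ 0 := by
    filter_upwards [hdec, hg.ae_differentiableAt] with t hdt hgt hmem
    have htab : t ∈ Set.Ioo a b := ⟨lt_trans h1 hmem.1, lt_trans hmem.2 h3⟩
    have hveq : v =ᶠ[nhds t] g :=
      Filter.eventuallyEq_of_mem (isOpen_Ioo.mem_nhds htab)
        (fun x hx => heq (Set.Ioo_subset_Icc_self hx))
    have hdv : DifferentiableAt ℝ v t := (hveq.differentiableAt_iff).2 hgt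
    have := hdt hmem hdv
    rw [hveq.deriv_eq] at this
    linarith
  have hle : g x₂ ≤ g x₁ := lipschitz_ftc_le hg h2 hneg
  rw [← heq hx1, ← heq hx2, hv1, hv2] at hle
  linarith [hαpos x₁ hx1, hαpos x₂ hx2]
end
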